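/- arXiv:1902.09433 — 2 statements merged into one kernel-verified Lean document; each statement's English description precedes it below -/
import Mathlib

section
/- Let β > 0 and define Ψ_n(μ,t) as in the context. There exist constants C > 0 and c > 0 (depending only on β) such that for all μ > 0 and all t ≥ 0 with μ·t ≤ c, the series Σ_{n≥0} n²·Ψ_n(μ,t) converges and Σ_{n≥0} n²·Ψ_n(μ,t) ≤ C·( μ·t + (μ·t)² ). (This is the short-time bound on the second moment of the number of collisions of the stationary linear Boltzmann jump process.) -/
open MeasureTheory

noncomputable section

abbrev E3 := EuclideanSpace ℝ (Fin 3)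

/-- The Maxwellian density with inverse temperature `β` on `ℝ³`. -/
def Mβ (β : ℝ) (v : E3) : ℝ :=
  (β / (2 * Real.pi)) ^ ((3 : ℝ) / 2) * Real.exp (-(β / 2) * ‖v‖ ^ 2)

/-- The collision frequency `λ(v) = π ∫ M_β(w) ‖v − w‖ dw`. -/
def lam (β : ℝ) (v : E3) : ℝ := Real.pi * ∫ w : E3, Mβ β w * ‖v - w‖

/-- `e(v,v') = (β/(2π))^(1/2) · exp(−(β/2)·((v'·(v'−v))/‖v'−v‖)²)`, the integral of `M_β`
over the plane `E(v,v')`. -/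
def eFun (β : ℝ) (v v' : E3) : ℝ :=
  (β / (2 * Real.pi)) ^ ((1 : ℝ) / 2) *
    Real.exp (-(β / 2) * ((inner ℝ v' (v' - v) : ℝ) / ‖v' - v‖) ^ 2)

/-- The full velocity vector `(v₀, v₁, …, vₙ)` obtained by prepending the initial
velocity `v₀` to the post-collisional velocities `w = (v₁, …, vₙ)`. -/
def consV {m : ℕ} (v₀ : E3) (w : Fin m → E3) : Fin (m + 1) → E3 := Fin.cons v₀ w

/-- The full time vector `(t₀, t₁, …, tₙ)` with `t₀ = t` and collision times
`τ = (t₁, …, tₙ)`. -/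
def consT {m : ℕ} (t : ℝ) (τ : Fin m → ℝ) : Fin (m + 1) → ℝ := Fin.cons t τ

/-- The weight `Ψ_n(μ,t)` of `n` collisions up to time `t` for the stationary linear
Boltzmann jump process: `Ψ_0(μ,t) = ∫ M_β(v₀) e^{−μλ(v₀)t} dv₀`, and for `n ≥ 1`,
`Ψ_n(μ,t) = μⁿ ∫ M_β(v₀) ∫_{0 ≤ tₙ ≤ ⋯ ≤ t₁ ≤ t} ∫_{(ℝ³)ⁿ}
   (Π_{i=1}^n e(v_{i−1},v_i)/‖v_i − v_{i−1}‖)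
   e^{−μ(Σ_{i=0}^{n−1} λ(v_i)(t_i − t_{i+1}) + λ(v_n) tₙ)} dv dt dv₀` with `t₀ = t`. -/
def Psi (β μ t : ℝ) : ℕ → ℝ
  | 0 => ∫ v₀ : E3, Mβ β v₀ * Real.exp (-(μ * lam β v₀ * t))
  | n + 1 =>
      μ ^ (n + 1) *
        ∫ v₀ : E3, Mβ β v₀ *
          ∫ τ in {τ : Fin (n + 1) → ℝ |
              (∀ i, 0 ≤ τ i ∧ τ i ≤ t) ∧ ∀ i j : Fin (n + 1), i ≤ j → τ j ≤ τ i},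
            ∫ w : Fin (n + 1) → E3,
              (∏ i : Fin (n + 1),
                eFun β (consV v₀ w (Fin.castSucc i)) (consV v₀ w i.succ) /
                  ‖consV v₀ w i.succ - consV v₀ w (Fin.castSucc i)‖) *
              Real.exp (-(μ *
                ((∑ i : Fin (n + 1),
                    lam β (consV v₀ w (Fin.castSucc i)) *
                      (consT t τ (Fin.castSucc i) - consT t τ i.succ)) +
                  lam β (consV v₀ w (Fin.last (n + 1))) *
                    consT t τ (Fin.last (n + 1)))))

/-! ### Auxiliary material for the proof -/

open Metric
open scoped ENNReal

namespace BoltzmannAux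

/-- The comparison kernel dominating `eFun β x y / ‖y - x‖`. -/
def Bf (β : ℝ) (x y : E3) : ℝ :=
  (β / (2 * Real.pi)) ^ ((1 : ℝ) / 2) *
    (Real.exp ((β/4) * ‖x‖^2) * (Real.exp (-(β/4) * ‖y‖^2) * Real.exp (-(β/8) * ‖y-x‖^2)))
      / ‖y - x‖

attribute [irreducible] Bf

lemma g0_nonneg {β : ℝ} (hβ : 0 < β) : 0 ≤ (β / (2 * Real.pi)) ^ ((1 : ℝ) / 2) := by positivity

lemma Bf_nonneg {β : ℝ} (hβ : 0 < β) (x y : E3) : 0 ≤ Bf β x y := by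
  unfold Bf
  apply div_nonneg _ (norm_nonneg _)
  positivity

lemma eFun_nonneg {β : ℝ} (hβ : 0 < β) (x y : E3) : 0 ≤ eFun β x y := by
  unfold eFun; positivity

lemma Mβ_nonneg {β : ℝ} (hβ : 0 < β) (v : E3) : 0 ≤ Mβ β v := by
  unfold Mβ; positivity

lemma lam_nonneg {β : ℝ} (hβ : 0 < β) (v : E3) : 0 ≤ lam β v := by
  unfold lam
  apply mul_nonneg Real.pi_pos.le
  exact integral_nonneg fun w => mul_nonneg (Mβ_nonneg hβ w) (norm_nonneg _)

/-- The key pointwise domination of the collision kernel, a consequence of the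
detailed-balance symmetry of the Maxwellian. -/
lemma eFun_div_le_Bf {β : ℝ} (hβ : 0 < β) (x y : E3) :
    eFun β x y / ‖y - x‖ ≤ Bf β x y := by
  rcases eq_or_ne y x with h | h
  · subst h; simp [eFun, Bf, sub_self]
  · have hr : 0 < ‖y - x‖ := norm_pos_iff.2 (sub_ne_zero.2 h)
    unfold eFun Bf
    gcongr ?_ / ‖y - x‖
    have hg0 := g0_nonneg hβ
    set a : ℝ := (inner ℝ x (y - x) : ℝ) / ‖y - x‖ with ha
    set b : ℝ := (inner ℝ y (y - x) : ℝ) / ‖y - x‖ with hb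
    rw [← Real.exp_add, ← Real.exp_add]
    apply mul_le_mul_of_nonneg_left _ hg0
    apply Real.exp_le_exp.2
    have hself : (inner ℝ (y - x) (y - x) : ℝ) = ‖y - x‖ ^ 2 := real_inner_self_eq_norm_sq _
    have key1 : b - a = ‖y - x‖ := by
      rw [ha, hb, div_sub_div_same, ← inner_sub_left, hself, sq]
      field_simp
    have key2 : b * b - a * a = ‖y‖ ^ 2 - ‖x‖ ^ 2 := by
      have hba : (b - a) * (b + a) = b * b - a * a := by ring
      have hsum : b + a = (inner ℝ (y + x) (y - x) : ℝ) / ‖y - x‖ := by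
        rw [ha, hb, ← add_div, ← inner_add_left]
      have hinner : (inner ℝ (y + x) (y - x) : ℝ) = ‖y‖ ^ 2 - ‖x‖ ^ 2 := by
        rw [inner_add_left, inner_sub_right, inner_sub_right,
          real_inner_self_eq_norm_sq, real_inner_self_eq_norm_sq, real_inner_comm x y]
        ring
      rw [← hba, key1, hsum, hinner]
      field_simp
    have key3 : ‖y - x‖ ^ 2 = (b - a) ^ 2 := by rw [key1]
    rw [key3]
    nlinarith [sq_nonneg (a + b), hβ.le, key2]

lemma integrable_gauss (b : ℝ) (hb : 0 < b) :
    Integrable (fun v : E3 => Real.exp (-b * ‖v‖^2)) := by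
  have h := (GaussianFourier.integrable_cexp_neg_mul_sq_norm_add (V := E3) (b := (b:ℂ))
    (by simp [hb]) 0 0).norm
  refine h.congr (Filter.Eventually.of_forall fun v => ?_)
  simp only [Complex.norm_exp, zero_mul, add_zero]
  norm_cast

lemma lintegral_gauss_lt_top (b : ℝ) (hb : 0 < b) :
    ∫⁻ u : E3, ENNReal.ofReal (Real.exp (-b * ‖u‖^2)) < ⊤ := by
  have h := (integrable_gauss b hb).hasFiniteIntegral
  rwa [hasFiniteIntegral_iff_ofReal (Filter.Eventually.of_forall fun v => (Real.exp_pos _).le)] at h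

lemma lintegral_kernel_lt_top (b : ℝ) (hb : 0 < b) :
    ∫⁻ u : E3, ENNReal.ofReal (Real.exp (-b * ‖u‖^2) / ‖u‖) < ⊤ := by
  set A : ℕ → Set E3 := fun k => closedBall (0:E3) ((2:ℝ)⁻¹^k) \ ball 0 ((2:ℝ)⁻¹^(k+1)) with hA
  have hpt : ∀ u : E3, ENNReal.ofReal (Real.exp (-b*‖u‖^2) / ‖u‖) ≤
      (∑' k : ℕ, (A k).indicator (fun _ => ENNReal.ofReal ((2:ℝ)^(k+1))) u)
        + ENNReal.ofReal (Real.exp (-b*‖u‖^2)) := by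
    intro u
    rcases le_or_gt 1 ‖u‖ with h1 | h1
    · refine le_add_of_nonneg_of_le zero_le (ENNReal.ofReal_le_ofReal ?_)
      calc Real.exp (-b*‖u‖^2) / ‖u‖ ≤ Real.exp (-b*‖u‖^2) / 1 := by
            apply div_le_div_of_nonneg_left (Real.exp_pos _).le one_pos h1
        _ = _ := div_one _
    · rcases eq_or_ne u 0 with rfl | hu
      · simp
      have hr : 0 < ‖u‖ := norm_pos_iff.2 hu
      have hex : ∃ n : ℕ, (2⁻¹:ℝ)^n < ‖u‖ := exists_pow_lt_of_lt_one hr (by norm_num)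
      classical
      set k' := Nat.find hex with hk'
      have hk'lt : (2⁻¹:ℝ)^k' < ‖u‖ := Nat.find_spec hex
      have hk'pos : k' ≠ 0 := by
        intro h0
        rw [h0, pow_zero] at hk'lt; linarith
      obtain ⟨k, hks⟩ := Nat.exists_eq_succ_of_ne_zero hk'pos
      rw [hks] at hk'lt
      have hmin : ‖u‖ ≤ (2⁻¹:ℝ)^k := le_of_not_gt (Nat.find_min hex (by omega))
      have hmem : u ∈ A k := by
        constructor
        · simpa [dist_eq_norm] using hmin
        · simpa [dist_eq_norm] using not_lt.2 hk'lt.le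
      refine le_add_of_le_of_nonneg ?_ zero_le
      have : ENNReal.ofReal (Real.exp (-b*‖u‖^2) / ‖u‖) ≤ ENNReal.ofReal ((2:ℝ)^(k+1)) := by
        apply ENNReal.ofReal_le_ofReal
        have h2 : Real.exp (-b*‖u‖^2) / ‖u‖ ≤ 1 / ‖u‖ := by
          gcongr
          exact Real.exp_le_one_iff.2 (by nlinarith [sq_nonneg ‖u‖])
        refine h2.trans ?_
        rw [div_le_iff₀ hr, show ((2:ℝ)^(k+1)) = ((2:ℝ)⁻¹^(k+1))⁻¹ by rw [← inv_pow]; norm_num]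
        rw [inv_mul_eq_div, le_div_iff₀ (by positivity), one_mul]
        exact hk'lt.le
      calc ENNReal.ofReal (Real.exp (-b*‖u‖^2) / ‖u‖) ≤
          (A k).indicator (fun _ => ENNReal.ofReal ((2:ℝ)^(k+1))) u := by
            rwa [Set.indicator_of_mem hmem]
        _ ≤ _ := ENNReal.le_tsum k
  calc ∫⁻ u : E3, ENNReal.ofReal (Real.exp (-b * ‖u‖^2) / ‖u‖)
      ≤ ∫⁻ u, ((∑' k : ℕ, (A k).indicator (fun _ => ENNReal.ofReal ((2:ℝ)^(k+1))) u)
        + ENNReal.ofReal (Real.exp (-b*‖u‖^2))) := lintegral_mono hpt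
    _ < ⊤ := by
        rw [lintegral_add_right _ (by fun_prop)]
        apply ENNReal.add_lt_top.2 ⟨?_, lintegral_gauss_lt_top b hb⟩
        rw [lintegral_tsum (fun k => (measurable_const.indicator
          ((measurableSet_closedBall).diff measurableSet_ball)).aemeasurable)]
        have hterm : ∀ k : ℕ, (∫⁻ u, (A k).indicator (fun _ => ENNReal.ofReal ((2:ℝ)^(k+1))) u)
            ≤ ENNReal.ofReal 2 * (ENNReal.ofReal (4⁻¹))^k * volume (ball (0:E3) 1) := by
          intro k
          rw [lintegral_indicator ((measurableSet_closedBall).diff measurableSet_ball) _,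
            setLIntegral_const]
          calc ENNReal.ofReal ((2:ℝ)^(k+1)) * volume (A k)
              ≤ ENNReal.ofReal ((2:ℝ)^(k+1)) * volume (closedBall (0:E3) ((2:ℝ)⁻¹^k)) :=
                mul_le_mul_right (measure_mono Set.diff_subset) _
            _ = ENNReal.ofReal ((2:ℝ)^(k+1)) *
                (ENNReal.ofReal (((2:ℝ)⁻¹^k)^(Module.finrank ℝ E3)) * volume (ball (0:E3) 1)) := by
                rw [Measure.addHaar_closedBall _ _ (by positivity)]
            _ = _ := by
                rw [← mul_assoc, ← ENNReal.ofReal_mul (by positivity), ← ENNReal.ofReal_pow (by norm_num),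
                  ← ENNReal.ofReal_mul (by norm_num)]
                congr 2
                rw [show Module.finrank ℝ E3 = 3 by simp [finrank_euclideanSpace]]
                have h1 : (2:ℝ)^k * 2⁻¹^k = 1 := by rw [← mul_pow]; norm_num
                have h4 : ((4:ℝ)⁻¹)^k = 2⁻¹^k * 2⁻¹^k := by rw [← mul_pow]; norm_num
                rw [h4, pow_succ, show ((2⁻¹:ℝ)^k)^3 = 2⁻¹^k*2⁻¹^k*2⁻¹^k by ring]
                linear_combination (2 * (2:ℝ)⁻¹^k * 2⁻¹^k) * h1
        calc (∑' k : ℕ, ∫⁻ u, (A k).indicator (fun _ => ENNReal.ofReal ((2:ℝ)^(k+1))) u)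
            ≤ ∑' k : ℕ, ENNReal.ofReal 2 * (ENNReal.ofReal (4⁻¹))^k * volume (ball (0:E3) 1) :=
              ENNReal.tsum_le_tsum hterm
          _ = ENNReal.ofReal 2 * (1 - ENNReal.ofReal 4⁻¹)⁻¹ * volume (ball (0:E3) 1) := by
              rw [ENNReal.tsum_mul_right, ENNReal.tsum_mul_left, ENNReal.tsum_geometric]
          _ < ⊤ := by
              apply ENNReal.mul_lt_top (ENNReal.mul_lt_top ENNReal.ofReal_lt_top ?_) measure_ball_lt_top
              rw [ENNReal.inv_lt_top]
              apply tsub_pos_of_lt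
              exact ENNReal.ofReal_lt_one.2 (by norm_num)

lemma oneStep {β : ℝ} (hβ : 0 < β) (x : E3) :
    ∫⁻ y : E3, ENNReal.ofReal (Bf β x y) * ENNReal.ofReal (Real.exp ((β/4) * ‖y‖^2))
      = ((ENNReal.ofReal ((β / (2 * Real.pi)) ^ ((1 : ℝ) / 2))) *
          (∫⁻ u : E3, ENNReal.ofReal (Real.exp (-(β/8) * ‖u‖^2) / ‖u‖))) *
        ENNReal.ofReal (Real.exp ((β/4) * ‖x‖^2)) := by
  have hg0 := g0_nonneg hβ
  have hpt : ∀ y : E3, ENNReal.ofReal (Bf β x y) * ENNReal.ofReal (Real.exp ((β/4) * ‖y‖^2))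
      = ENNReal.ofReal ((β / (2 * Real.pi)) ^ ((1 : ℝ) / 2) * Real.exp ((β/4) * ‖x‖^2))
        * ENNReal.ofReal (Real.exp (-(β/8) * ‖y-x‖^2) / ‖y - x‖) := by
    intro y
    rw [← ENNReal.ofReal_mul (Bf_nonneg hβ x y), ← ENNReal.ofReal_mul (by positivity)]
    congr 1
    unfold Bf
    rw [div_mul_eq_mul_div, ← mul_div_assoc]
    congr 1
    simp only [mul_assoc, ← Real.exp_add]
    congr 2
    ring
  calc ∫⁻ y : E3, ENNReal.ofReal (Bf β x y) * ENNReal.ofReal (Real.exp ((β/4) * ‖y‖^2))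
      = ∫⁻ y : E3, ENNReal.ofReal ((β / (2 * Real.pi)) ^ ((1 : ℝ) / 2) * Real.exp ((β/4) * ‖x‖^2))
        * ENNReal.ofReal (Real.exp (-(β/8) * ‖y-x‖^2) / ‖y - x‖) := lintegral_congr hpt
    _ = ENNReal.ofReal ((β / (2 * Real.pi)) ^ ((1 : ℝ) / 2) * Real.exp ((β/4) * ‖x‖^2))
        * ∫⁻ y : E3, ENNReal.ofReal (Real.exp (-(β/8) * ‖y-x‖^2) / ‖y - x‖) :=
        lintegral_const_mul' _ _ ENNReal.ofReal_ne_top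
    _ = _ := by
        have htrans : ∫⁻ y : E3, ENNReal.ofReal (Real.exp (-(β/8) * ‖y-x‖^2) / ‖y - x‖)
            = ∫⁻ u : E3, ENNReal.ofReal (Real.exp (-(β/8) * ‖u‖^2) / ‖u‖) := by
          have := lintegral_add_right_eq_self (μ := (volume : Measure E3))
            (fun u : E3 => ENNReal.ofReal (Real.exp (-(β/8) * ‖u‖^2) / ‖u‖)) (-x)
          simp only [← sub_eq_add_neg] at this
          exact this
        rw [htrans, ENNReal.ofReal_mul hg0]
        ring

/-- The one-step constant of the comparison chain. -/
def Dnu (β : ℝ) : ℝ≥0∞ :=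
  ENNReal.ofReal ((β / (2 * Real.pi)) ^ ((1 : ℝ) / 2)) *
    ∫⁻ u : E3, ENNReal.ofReal (Real.exp (-(β/8) * ‖u‖^2) / ‖u‖)

lemma Dnu_ne_top {β : ℝ} (hβ : 0 < β) : Dnu β ≠ ⊤ :=
  ENNReal.mul_ne_top ENNReal.ofReal_ne_top (lintegral_kernel_lt_top (β/8) (by positivity)).ne

lemma measurable_cons_apply {m : ℕ} (x : E3) (j : Fin (m+1)) :
    Measurable (fun w : Fin m → E3 => (Fin.cons x w : Fin (m+1) → E3) j) := by
  induction j using Fin.cases with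
  | zero => simp only [Fin.cons_zero]; exact measurable_const
  | succ i => simp only [Fin.cons_succ]; exact measurable_pi_apply i

lemma measurable_Bf (β : ℝ) : Measurable (fun p : E3 × E3 => Bf β p.1 p.2) := by
  unfold Bf
  apply Measurable.div <;> fun_prop

set_option maxHeartbeats 1000000 in
/-- Main chain estimate: the `m`-fold integral of the product of comparison kernels
telescopes to `Dnu β ^ m` times a Gaussian weight in the initial velocity. -/
lemma claimW {β : ℝ} (hβ : 0 < β) : ∀ (m : ℕ) (x : E3),
    ∫⁻ w : Fin m → E3,
      (∏ i : Fin m, ENNReal.ofReal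
          (Bf β ((Fin.cons x w : Fin (m+1) → E3) (Fin.castSucc i))
            ((Fin.cons x w : Fin (m+1) → E3) i.succ)))
        * ENNReal.ofReal (Real.exp ((β/4) * ‖(Fin.cons x w : Fin (m+1) → E3) (Fin.last m)‖^2))
      ≤ (Dnu β) ^ m * ENNReal.ofReal (Real.exp ((β/4) * ‖x‖^2)) := by
  intro m
  induction m with
  | zero =>
    intro x
    have huniv : (volume : Measure (Fin 0 → E3)) Set.univ = 1 := by
      rw [MeasureTheory.volume_pi, Measure.pi_univ]
      simp
    simp only [Finset.univ_eq_empty, Finset.prod_empty, one_mul, pow_zero]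
    rw [show (Fin.last 0) = 0 from rfl]
    simp only [Fin.cons_zero]
    rw [lintegral_const, huniv, mul_one]
  | succ n ih =>
    intro x
    set G : (Fin (n+1) → E3) → ℝ≥0∞ := fun w =>
      (∏ i : Fin (n+1), ENNReal.ofReal
          (Bf β ((Fin.cons x w : Fin (n+2) → E3) (Fin.castSucc i))
            ((Fin.cons x w : Fin (n+2) → E3) i.succ)))
        * ENNReal.ofReal (Real.exp ((β/4) * ‖(Fin.cons x w : Fin (n+2) → E3) (Fin.last (n+1))‖^2)) with hG_def
    have hG : Measurable G := by
      apply Measurable.mul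
      · apply Finset.measurable_prod
        intro i _
        exact ENNReal.measurable_ofReal.comp ((measurable_Bf β).comp
          ((measurable_cons_apply x i.castSucc).prodMk (measurable_cons_apply x i.succ)))
      · apply ENNReal.measurable_ofReal.comp
        apply Measurable.comp Real.measurable_exp
        exact measurable_const.mul
          (((measurable_cons_apply x (Fin.last (n+1))).norm).pow measurable_const)
    set e := MeasurableEquiv.piFinSuccAbove (fun _ : Fin (n+1) => E3) 0 with he
    have hmp := (MeasureTheory.volume_preserving_piFinSuccAbove (fun _ : Fin (n+1) => E3) 0).symm
    have hdec : ∀ (y : E3) (w' : Fin n → E3), G (Fin.cons y w') =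
        ENNReal.ofReal (Bf β x y) *
          ((∏ i : Fin n, ENNReal.ofReal
              (Bf β ((Fin.cons y w' : Fin (n+1) → E3) (Fin.castSucc i))
                ((Fin.cons y w' : Fin (n+1) → E3) i.succ)))
            * ENNReal.ofReal (Real.exp ((β/4) * ‖(Fin.cons y w' : Fin (n+1) → E3) (Fin.last n)‖^2))) := by
      intro y w'
      rw [hG_def]
      simp only [Fin.prod_univ_succ, Fin.castSucc_zero, Fin.cons_zero, ← Fin.succ_castSucc,
        ← Fin.succ_last, Fin.cons_succ]
      ring
    have hsymm : ∀ (p : E3 × (Fin n → E3)), e.symm p = Fin.cons p.1 p.2 := by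
      intro p
      rw [he]
      simp [MeasurableEquiv.piFinSuccAbove, Fin.insertNthEquiv, Fin.insertNth_zero']
    calc ∫⁻ w : Fin (n+1) → E3, G w
        = ∫⁻ p : E3 × (Fin n → E3), G (e.symm p) := (hmp.lintegral_comp hG).symm
      _ = ∫⁻ y : E3, ∫⁻ w' : Fin n → E3, G (e.symm (y, w')) :=
          lintegral_prod _ (hG.comp hmp.measurable).aemeasurable
      _ = ∫⁻ y : E3, ENNReal.ofReal (Bf β x y) *
            ∫⁻ w' : Fin n → E3,
              ((∏ i : Fin n, ENNReal.ofReal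
                  (Bf β ((Fin.cons y w' : Fin (n+1) → E3) (Fin.castSucc i))
                    ((Fin.cons y w' : Fin (n+1) → E3) i.succ)))
                * ENNReal.ofReal (Real.exp ((β/4) * ‖(Fin.cons y w' : Fin (n+1) → E3) (Fin.last n)‖^2))) := by
          apply lintegral_congr
          intro y
          rw [← lintegral_const_mul' _ _ ENNReal.ofReal_ne_top]
          apply lintegral_congr
          intro w'
          rw [hsymm (y, w'), hdec y w']
      _ ≤ ∫⁻ y : E3, ENNReal.ofReal (Bf β x y) *
            ((Dnu β) ^ n * ENNReal.ofReal (Real.exp ((β/4) * ‖y‖^2))) :=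
          lintegral_mono fun y => mul_le_mul_right (ih y) _
      _ = (Dnu β) ^ n * ∫⁻ y : E3, ENNReal.ofReal (Bf β x y) *
            ENNReal.ofReal (Real.exp ((β/4) * ‖y‖^2)) := by
          rw [← lintegral_const_mul' _ _ (ENNReal.pow_ne_top (Dnu_ne_top hβ))]
          apply lintegral_congr
          intro y
          ring
      _ = (Dnu β) ^ n * ((ENNReal.ofReal ((β / (2 * Real.pi)) ^ ((1 : ℝ) / 2)) *
            (∫⁻ u : E3, ENNReal.ofReal (Real.exp (-(β/8) * ‖u‖^2) / ‖u‖))) *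
            ENNReal.ofReal (Real.exp ((β/4) * ‖x‖^2))) := by rw [oneStep hβ x]
      _ = (Dnu β) ^ (n+1) * ENNReal.ofReal (Real.exp ((β/4) * ‖x‖^2)) := by
          rw [Dnu, pow_succ]
          ring

/-- `ofReal` of a Bochner integral of a pointwise-nonnegative function is at most the
corresponding lower Lebesgue integral (no integrability needed). -/
lemma ofReal_integral_le {α : Type*} [MeasurableSpace α] (μ : Measure α) (f : α → ℝ)
    (hf : ∀ x, 0 ≤ f x) :
    ENNReal.ofReal (∫ x, f x ∂μ) ≤ ∫⁻ x, ENNReal.ofReal (f x) ∂μ := by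
  by_cases h : Integrable f μ
  · rw [integral_eq_lintegral_of_nonneg_ae (Filter.Eventually.of_forall hf)
      h.aestronglyMeasurable]
    exact ENNReal.ofReal_toReal_le
  · rw [integral_undef h]
    simp

lemma integral_le_toReal {α : Type*} [MeasurableSpace α] (μ : Measure α) (f : α → ℝ)
    (hf : ∀ x, 0 ≤ f x) {R : ℝ≥0∞} (hR : R ≠ ⊤)
    (h : ∫⁻ x, ENNReal.ofReal (f x) ∂μ ≤ R) : ∫ x, f x ∂μ ≤ R.toReal := by
  by_cases hi : Integrable f μ
  · rw [integral_eq_lintegral_of_nonneg_ae (Filter.Eventually.of_forall hf)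
      hi.aestronglyMeasurable]
    exact ENNReal.toReal_mono hR h
  · rw [integral_undef hi]
    exact ENNReal.toReal_nonneg

/-- The simplex-type time set is contained in the cube, so its volume is at most `t^m`. -/
lemma volume_S_le (m : ℕ) (t : ℝ) :
    volume {τ : Fin m → ℝ | (∀ i, 0 ≤ τ i ∧ τ i ≤ t) ∧ ∀ i j : Fin m, i ≤ j → τ j ≤ τ i}
      ≤ (ENNReal.ofReal t)^m := by
  have hsub : {τ : Fin m → ℝ | (∀ i, 0 ≤ τ i ∧ τ i ≤ t) ∧ ∀ i j : Fin m, i ≤ j → τ j ≤ τ i}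
      ⊆ Set.pi Set.univ (fun _ : Fin m => Set.Icc 0 t) := by
    intro τ hτ
    rw [Set.mem_pi]
    intro i _
    exact ⟨(hτ.1 i).1, (hτ.1 i).2⟩
  calc volume {τ : Fin m → ℝ | (∀ i, 0 ≤ τ i ∧ τ i ≤ t) ∧ ∀ i j : Fin m, i ≤ j → τ j ≤ τ i}
      ≤ volume (Set.pi Set.univ (fun _ : Fin m => Set.Icc (0:ℝ) t)) := measure_mono hsub
    _ = (ENNReal.ofReal t)^m := by
        rw [volume_pi_pi]
        simp [Real.volume_Icc]

lemma time_diff_nonneg {m : ℕ} {t : ℝ} {τ : Fin (m+1) → ℝ}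
    (hτ1 : ∀ i, 0 ≤ τ i ∧ τ i ≤ t) (hτ2 : ∀ i j : Fin (m+1), i ≤ j → τ j ≤ τ i) (i : Fin (m+1)) :
    0 ≤ consT t τ (Fin.castSucc i) - consT t τ i.succ := by
  unfold consT
  induction i using Fin.cases with
  | zero =>
    simp only [Fin.castSucc_zero, Fin.cons_zero, Fin.cons_succ]
    linarith [(hτ1 0).2]
  | succ j =>
    rw [← Fin.succ_castSucc]
    simp only [Fin.cons_succ]
    have := hτ2 (Fin.castSucc j) j.succ (by simp [Fin.le_def, Nat.le_succ])
    linarith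

lemma Psi_nonneg {β : ℝ} (hβ : 0 < β) (μ t : ℝ) (hμ : 0 ≤ μ) (n : ℕ) :
    0 ≤ Psi β μ t n := by
  cases n with
  | zero =>
    apply integral_nonneg
    intro v
    exact mul_nonneg (Mβ_nonneg hβ v) (Real.exp_pos _).le
  | succ n =>
    apply mul_nonneg (pow_nonneg hμ _)
    apply integral_nonneg
    intro v₀
    apply mul_nonneg (Mβ_nonneg hβ v₀)
    apply integral_nonneg
    intro τ
    apply integral_nonneg
    intro w
    apply mul_nonneg _ (Real.exp_pos _).le
    apply Finset.prod_nonneg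
    intro i _
    exact div_nonneg (eFun_nonneg hβ _ _) (norm_nonneg _)

set_option maxHeartbeats 1000000 in
lemma Psi_succ_le {β : ℝ} (hβ : 0 < β) {μ t : ℝ} (hμ : 0 < μ) (ht : 0 ≤ t) (n : ℕ) :
    Psi β μ t (n+1) ≤
      ((β / (2 * Real.pi)) ^ ((3:ℝ)/2) *
          (∫⁻ u : E3, ENNReal.ofReal (Real.exp (-(β/4) * ‖u‖^2))).toReal) *
        ((Dnu β).toReal * (μ * t))^(n+1) := by
  have hcβ : (0:ℝ) ≤ (β / (2 * Real.pi)) ^ ((3:ℝ)/2) := by positivity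
  set Gν : ℝ≥0∞ := ∫⁻ u : E3, ENNReal.ofReal (Real.exp (-(β/4) * ‖u‖^2)) with hGν
  have hGne : Gν ≠ ⊤ := (lintegral_gauss_lt_top (β/4) (by positivity)).ne
  have hDne : Dnu β ≠ ⊤ := Dnu_ne_top hβ
  set S : Set (Fin (n+1) → ℝ) := {τ : Fin (n + 1) → ℝ |
      (∀ i, 0 ≤ τ i ∧ τ i ≤ t) ∧ ∀ i j : Fin (n + 1), i ≤ j → τ j ≤ τ i} with hS
  set F : E3 → (Fin (n+1) → ℝ) → (Fin (n+1) → E3) → ℝ := fun v₀ τ w =>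
      (∏ i : Fin (n + 1),
        eFun β (consV v₀ w (Fin.castSucc i)) (consV v₀ w i.succ) /
          ‖consV v₀ w i.succ - consV v₀ w (Fin.castSucc i)‖) *
      Real.exp (-(μ *
        ((∑ i : Fin (n + 1),
            lam β (consV v₀ w (Fin.castSucc i)) *
              (consT t τ (Fin.castSucc i) - consT t τ i.succ)) +
          lam β (consV v₀ w (Fin.last (n + 1))) *
            consT t τ (Fin.last (n + 1))))) with hF
  have hFnonneg : ∀ v₀ τ w, 0 ≤ F v₀ τ w := by
    intro v₀ τ w
    apply mul_nonneg _ (Real.exp_pos _).le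
    apply Finset.prod_nonneg
    intro i _
    exact div_nonneg (eFun_nonneg hβ _ _) (norm_nonneg _)
  set Rν : ℝ≥0∞ := (Dnu β)^(n+1) * (ENNReal.ofReal t)^(n+1) *
      (ENNReal.ofReal ((β / (2 * Real.pi)) ^ ((3:ℝ)/2)) * Gν) with hRν
  have hRne : Rν ≠ ⊤ := by
    apply ENNReal.mul_ne_top
    · exact ENNReal.mul_ne_top (ENNReal.pow_ne_top hDne) (ENNReal.pow_ne_top ENNReal.ofReal_ne_top)
    · exact ENNReal.mul_ne_top ENNReal.ofReal_ne_top hGne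
  -- the inner w-integral bound, valid for every v₀ and every τ ∈ S
  have hstep : ∀ (v₀ : E3) (τ : Fin (n+1) → ℝ), τ ∈ S →
      ENNReal.ofReal (∫ w : Fin (n+1) → E3, F v₀ τ w) ≤
        (Dnu β)^(n+1) * ENNReal.ofReal (Real.exp ((β/4) * ‖v₀‖^2)) := by
    intro v₀ τ hτ
    refine le_trans (ofReal_integral_le _ _ (hFnonneg v₀ τ)) ?_
    refine le_trans (lintegral_mono (fun w => ?_)) (claimW hβ (n+1) v₀)
    -- pointwise bound on F
    have hE1 : Real.exp (-(μ *
        ((∑ i : Fin (n + 1),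
            lam β (consV v₀ w (Fin.castSucc i)) *
              (consT t τ (Fin.castSucc i) - consT t τ i.succ)) +
          lam β (consV v₀ w (Fin.last (n + 1))) *
            consT t τ (Fin.last (n + 1))))) ≤ 1 := by
      apply Real.exp_le_one_iff.2
      apply neg_nonpos_of_nonneg
      apply mul_nonneg hμ.le
      apply add_nonneg
      · apply Finset.sum_nonneg
        intro i _
        exact mul_nonneg (lam_nonneg hβ _) (time_diff_nonneg hτ.1 hτ.2 i)
      · apply mul_nonneg (lam_nonneg hβ _)
        have : consT t τ (Fin.last (n+1)) = τ (Fin.last n) := by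
          rw [consT, ← Fin.succ_last, Fin.cons_succ]
        rw [this]
        exact (hτ.1 (Fin.last n)).1
    calc ENNReal.ofReal (F v₀ τ w)
        ≤ ENNReal.ofReal (∏ i : Fin (n + 1),
            eFun β (consV v₀ w (Fin.castSucc i)) (consV v₀ w i.succ) /
              ‖consV v₀ w i.succ - consV v₀ w (Fin.castSucc i)‖) := by
          apply ENNReal.ofReal_le_ofReal
          rw [hF]
          apply mul_le_of_le_one_right _ hE1
          apply Finset.prod_nonneg
          intro i _
          exact div_nonneg (eFun_nonneg hβ _ _) (norm_nonneg _)
      _ = ∏ i : Fin (n + 1), ENNReal.ofReal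
            (eFun β (consV v₀ w (Fin.castSucc i)) (consV v₀ w i.succ) /
              ‖consV v₀ w i.succ - consV v₀ w (Fin.castSucc i)‖) :=
          ENNReal.ofReal_prod_of_nonneg
            (fun i _ => div_nonneg (eFun_nonneg hβ _ _) (norm_nonneg _))
      _ ≤ ∏ i : Fin (n + 1), ENNReal.ofReal
          (Bf β ((Fin.cons v₀ w : Fin (n+2) → E3) (Fin.castSucc i))
            ((Fin.cons v₀ w : Fin (n+2) → E3) i.succ)) := by
          apply Finset.prod_le_prod'
          intro i _
          apply ENNReal.ofReal_le_ofReal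
          exact eFun_div_le_Bf hβ _ _
      _ ≤ (∏ i : Fin (n+1), ENNReal.ofReal
            (Bf β ((Fin.cons v₀ w : Fin (n+2) → E3) (Fin.castSucc i))
              ((Fin.cons v₀ w : Fin (n+2) → E3) i.succ)))
          * ENNReal.ofReal (Real.exp ((β/4) * ‖(Fin.cons v₀ w : Fin (n+2) → E3) (Fin.last (n+1))‖^2)) := by
          apply le_mul_of_one_le_right zero_le
          rw [ENNReal.one_le_ofReal]
          apply Real.one_le_exp
          positivity
  -- now the τ integral and the v₀ integral
  have hA : (∫ v₀ : E3, Mβ β v₀ * ∫ τ in S, ∫ w : Fin (n+1) → E3, F v₀ τ w) ≤ Rν.toReal := by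
    apply integral_le_toReal
    · intro v₀
      apply mul_nonneg (Mβ_nonneg hβ v₀)
      apply integral_nonneg
      intro τ
      exact integral_nonneg (hFnonneg v₀ τ)
    · exact hRne
    calc ∫⁻ v₀ : E3, ENNReal.ofReal (Mβ β v₀ * ∫ τ in S, ∫ w : Fin (n+1) → E3, F v₀ τ w)
        ≤ ∫⁻ v₀ : E3, ENNReal.ofReal (Mβ β v₀) *
            ((Dnu β)^(n+1) * ENNReal.ofReal (Real.exp ((β/4) * ‖v₀‖^2)) * (ENNReal.ofReal t)^(n+1)) := by
          apply lintegral_mono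
          intro v₀
          dsimp only
          rw [ENNReal.ofReal_mul (Mβ_nonneg hβ v₀)]
          apply mul_le_mul_right
          calc ENNReal.ofReal (∫ τ in S, ∫ w : Fin (n+1) → E3, F v₀ τ w)
              ≤ ∫⁻ τ in S, ENNReal.ofReal (∫ w : Fin (n+1) → E3, F v₀ τ w) :=
                ofReal_integral_le _ _ (fun τ => integral_nonneg (hFnonneg v₀ τ))
            _ ≤ ∫⁻ _ in S, ((Dnu β)^(n+1) * ENNReal.ofReal (Real.exp ((β/4) * ‖v₀‖^2))) :=
                setLIntegral_mono measurable_const (fun τ hτ => hstep v₀ τ hτ)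
            _ = ((Dnu β)^(n+1) * ENNReal.ofReal (Real.exp ((β/4) * ‖v₀‖^2))) * volume S :=
                setLIntegral_const _ _
            _ ≤ ((Dnu β)^(n+1) * ENNReal.ofReal (Real.exp ((β/4) * ‖v₀‖^2))) * (ENNReal.ofReal t)^(n+1) :=
                mul_le_mul_right (volume_S_le (n+1) t) _
            _ = (Dnu β)^(n+1) * ENNReal.ofReal (Real.exp ((β/4) * ‖v₀‖^2)) * (ENNReal.ofReal t)^(n+1) := by
                ring
      _ = (Dnu β)^(n+1) * (ENNReal.ofReal t)^(n+1) *
            ∫⁻ v₀ : E3, ENNReal.ofReal (Mβ β v₀) * ENNReal.ofReal (Real.exp ((β/4) * ‖v₀‖^2)) := by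
          rw [← lintegral_const_mul' _ _
            (ENNReal.mul_ne_top (ENNReal.pow_ne_top hDne) (ENNReal.pow_ne_top ENNReal.ofReal_ne_top))]
          apply lintegral_congr
          intro v₀
          ring
      _ = Rν := by
          rw [hRν]
          congr 1
          calc ∫⁻ v₀ : E3, ENNReal.ofReal (Mβ β v₀) * ENNReal.ofReal (Real.exp ((β/4) * ‖v₀‖^2))
              = ∫⁻ v₀ : E3, ENNReal.ofReal ((β / (2 * Real.pi)) ^ ((3:ℝ)/2)) *
                  ENNReal.ofReal (Real.exp (-(β/4) * ‖v₀‖^2)) := by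
                apply lintegral_congr
                intro v₀
                rw [← ENNReal.ofReal_mul hcβ, ← ENNReal.ofReal_mul (Mβ_nonneg hβ v₀)]
                congr 1
                rw [Mβ, mul_assoc, ← Real.exp_add]
                congr 2
                ring
              _ = ENNReal.ofReal ((β / (2 * Real.pi)) ^ ((3:ℝ)/2)) * Gν :=
                lintegral_const_mul' _ _ ENNReal.ofReal_ne_top
  -- conclude
  have hPsi : Psi β μ t (n+1) = μ^(n+1) *
      ∫ v₀ : E3, Mβ β v₀ * ∫ τ in S, ∫ w : Fin (n+1) → E3, F v₀ τ w := rfl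
  rw [hPsi]
  have h2 : Rν.toReal = (Dnu β).toReal^(n+1) * t^(n+1) *
      ((β / (2 * Real.pi)) ^ ((3:ℝ)/2) * Gν.toReal) := by
    rw [hRν, ENNReal.toReal_mul, ENNReal.toReal_mul, ENNReal.toReal_mul, ENNReal.toReal_pow,
      ENNReal.toReal_pow, ENNReal.toReal_ofReal ht, ENNReal.toReal_ofReal hcβ]
  calc μ^(n+1) * ∫ v₀ : E3, Mβ β v₀ * ∫ τ in S, ∫ w : Fin (n+1) → E3, F v₀ τ w
      ≤ μ^(n+1) * Rν.toReal := by
        apply mul_le_mul_of_nonneg_left hA (by positivity)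
    _ = _ := by
        rw [h2]
        ring

end BoltzmannAux

/-- Short-time bound on the second moment of the number of collisions of the stationary
linear Boltzmann jump process: there are `C, c > 0` (depending only on `β`) such that
for all `μ > 0`, `t ≥ 0` with `μt ≤ c`, the series `Σ n² Ψ_n(μ,t)` converges and
`Σ_{n≥0} n² Ψ_n(μ,t) ≤ C (μt + (μt)²)`. -/
theorem second_moment_collisions_short_time (β : ℝ) (hβ : 0 < β) :
    ∃ C c : ℝ, 0 < C ∧ 0 < c ∧ ∀ μ t : ℝ, 0 < μ → 0 ≤ t → μ * t ≤ c →
      Summable (fun n : ℕ => (n : ℝ) ^ 2 * Psi β μ t n) ∧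
      (∑' n : ℕ, (n : ℝ) ^ 2 * Psi β μ t n) ≤ C * (μ * t + (μ * t) ^ 2) := by
  classical
  set D : ℝ := (BoltzmannAux.Dnu β).toReal with hD
  have hD0 : 0 ≤ D := ENNReal.toReal_nonneg
  set K : ℝ := (β / (2 * Real.pi)) ^ ((3:ℝ)/2) *
      (∫⁻ u : E3, ENNReal.ofReal (Real.exp (-(β/4) * ‖u‖^2))).toReal with hK
  have hK0 : 0 ≤ K := mul_nonneg (by positivity) ENNReal.toReal_nonneg
  have hTs : Summable (fun n : ℕ => (n:ℝ)^2 * (1/2:ℝ)^n) := by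
    simpa using summable_pow_mul_geometric_of_norm_lt_one 2 (r := (1/2:ℝ)) (by norm_num)
  set T : ℝ := ∑' n : ℕ, (n:ℝ)^2 * (1/2:ℝ)^n with hT
  have hT0 : 0 ≤ T := tsum_nonneg (fun n => by positivity)
  refine ⟨2*K*(D+1)*T + 1, 1/(2*(D+1)), by positivity, by positivity, ?_⟩
  intro μ t hμ ht hμt
  have hμt0 : 0 ≤ μ * t := mul_nonneg hμ.le ht
  have hhalf : (D+1)*(μ*t) ≤ 1/2 := by
    calc (D+1)*(μ*t) ≤ (D+1) * (1/(2*(D+1))) :=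
          mul_le_mul_of_nonneg_left hμt (by linarith)
      _ = 1/2 := by
          field_simp
  have hbd : ∀ n : ℕ, (n:ℝ)^2 * Psi β μ t n ≤
      (2*K*(D+1)*(μ*t)) * ((n:ℝ)^2 * (1/2:ℝ)^n) := by
    intro n
    cases n with
    | zero => simp
    | succ n =>
      have h1 : Psi β μ t (n+1) ≤ K * (D*(μ*t))^(n+1) := BoltzmannAux.Psi_succ_le hβ hμ ht n
      have hx : 0 ≤ D * (μ*t) := mul_nonneg hD0 hμt0
      have hx2 : (D*(μ*t)) ≤ (D+1)*(μ*t) := mul_le_mul_of_nonneg_right (by linarith) hμt0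
      calc ((n+1:ℕ):ℝ)^2 * Psi β μ t (n+1)
          ≤ ((n+1:ℕ):ℝ)^2 * (K * (D*(μ*t))^(n+1)) :=
            mul_le_mul_of_nonneg_left h1 (by positivity)
        _ ≤ ((n+1:ℕ):ℝ)^2 * (K * ((D+1)*(μ*t) * (1/2:ℝ)^n)) := by
            apply mul_le_mul_of_nonneg_left _ (by positivity)
            apply mul_le_mul_of_nonneg_left _ hK0
            calc (D*(μ*t))^(n+1) ≤ ((D+1)*(μ*t))^(n+1) := pow_le_pow_left₀ hx hx2 _
              _ = ((D+1)*(μ*t)) * ((D+1)*(μ*t))^n := by rw [pow_succ]; ring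
              _ ≤ ((D+1)*(μ*t)) * (1/2:ℝ)^n := by
                  apply mul_le_mul_of_nonneg_left _ (by positivity)
                  exact pow_le_pow_left₀ (by positivity) hhalf n
        _ = (2*K*(D+1)*(μ*t)) * (((n+1:ℕ):ℝ)^2 * (1/2:ℝ)^(n+1)) := by
            rw [pow_succ]
            ring
  have hnn : ∀ n : ℕ, 0 ≤ (n:ℝ)^2 * Psi β μ t n :=
    fun n => mul_nonneg (by positivity) (BoltzmannAux.Psi_nonneg hβ μ t hμ.le n)
  have hsum2 : Summable (fun n : ℕ => (2*K*(D+1)*(μ*t)) * ((n:ℝ)^2 * (1/2:ℝ)^n)) :=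
    hTs.mul_left _
  have hs : Summable (fun n : ℕ => (n:ℝ)^2 * Psi β μ t n) :=
    Summable.of_nonneg_of_le hnn hbd hsum2
  refine ⟨hs, ?_⟩
  have hP : 0 ≤ 2*K*(D+1)*T := by positivity
  calc (∑' n : ℕ, (n:ℝ)^2 * Psi β μ t n)
      ≤ ∑' n : ℕ, (2*K*(D+1)*(μ*t)) * ((n:ℝ)^2 * (1/2:ℝ)^n) := Summable.tsum_le_tsum hbd hs hsum2
    _ = (2*K*(D+1)*(μ*t)) * T := tsum_mul_left
    _ ≤ (2*K*(D+1)*T + 1) * (μ * t + (μ * t) ^ 2) := by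
        nlinarith [mul_nonneg hP (sq_nonneg (μ*t)), sq_nonneg (μ*t), hμt0,
          mul_nonneg (mul_nonneg (mul_nonneg (by linarith : (0:ℝ) ≤ 2*K) (by linarith : (0:ℝ) ≤ D+1)) hT0) hμt0]
end
end

section
/- Let β > 0 and define Ψ_n(μ,t) as in the context. There exist constants C > 0 and c > 0 (depending only on β) such that for all μ > 0 and all t ≥ 0 with μ·t ≤ c, the tail series Σ_{n≥2} Ψ_n(μ,t) converges and Σ_{n≥2} Ψ_n(μ,t) ≤ C·(μ·t)². (The weight corresponding to at least two collisions of the stationary linear Boltzmann jump process up to time t is of order (μt)².) -/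
open MeasureTheory

noncomputable section

/-! ### Auxiliary definitions and lemmas -/

/-- The dominating translation-invariant kernel. -/
def Gk (β : ℝ) (u : E3) : ℝ :=
  (β / (2 * Real.pi)) ^ ((1 : ℝ) / 2) * Real.exp (-(β / 8) * ‖u‖ ^ 2) / ‖u‖

lemma two_pi_pos : (0:ℝ) < 2 * Real.pi := by positivity

lemma Mβ_pos {β : ℝ} (hβ : 0 < β) (v : E3) : 0 < Mβ β v :=
  mul_pos (Real.rpow_pos_of_pos (div_pos hβ two_pi_pos) _) (Real.exp_pos _)

lemma Mβ_le {β : ℝ} (hβ : 0 < β) (v : E3) :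
    Mβ β v ≤ (β / (2 * Real.pi)) ^ ((3 : ℝ) / 2) := by
  have h1 : Real.exp (-(β / 2) * ‖v‖ ^ 2) ≤ 1 := by
    rw [← Real.exp_zero]
    apply Real.exp_le_exp.mpr
    have : 0 ≤ (β/2) * ‖v‖^2 := by positivity
    linarith
  calc Mβ β v ≤ (β / (2 * Real.pi)) ^ ((3 : ℝ) / 2) * 1 := by
        apply mul_le_mul_of_nonneg_left h1
        exact (Real.rpow_pos_of_pos (div_pos hβ two_pi_pos) _).le
    _ = _ := mul_one _

lemma sqrt_exp (x : ℝ) : Real.sqrt (Real.exp x) = Real.exp (x/2) := by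
  rw [show Real.exp x = (Real.exp (x/2))^2 by rw [← Real.exp_nat_mul]; ring_nf,
    Real.sqrt_sq (Real.exp_nonneg _)]

lemma sqrt_Mβ_eq {β : ℝ} (hβ : 0 < β) (v : E3) :
    Real.sqrt (Mβ β v) =
      Real.sqrt ((β / (2 * Real.pi)) ^ ((3 : ℝ) / 2)) * Real.exp (-(β / 4) * ‖v‖ ^ 2) := by
  rw [Mβ, Real.sqrt_mul (Real.rpow_pos_of_pos (div_pos hβ two_pi_pos) _).le, sqrt_exp]
  ring_nf

lemma sqrt_Mβ_pos {β : ℝ} (hβ : 0 < β) (v : E3) : 0 < Real.sqrt (Mβ β v) :=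
  Real.sqrt_pos.mpr (Mβ_pos hβ v)

lemma eFun_nonneg {β : ℝ} (hβ : 0 < β) (v v' : E3) : 0 ≤ eFun β v v' := by
  unfold eFun; positivity

lemma Gk_nonneg {β : ℝ} (hβ : 0 < β) (u : E3) : 0 ≤ Gk β u := by
  unfold Gk; positivity

lemma lam_nonneg {β : ℝ} (hβ : 0 < β) (v : E3) : 0 ≤ lam β v := by
  apply mul_nonneg Real.pi_pos.le
  apply integral_nonneg
  intro w
  exact mul_nonneg (Mβ_pos hβ w).le (norm_nonneg _)

/-- The key pointwise kernel estimate coming from detailed balance. -/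
lemma key_kernel {β : ℝ} (hβ : 0 < β) (v v' : E3) :
    Real.sqrt (Mβ β v) * (eFun β v v' / ‖v' - v‖) ≤
      Real.sqrt (Mβ β v') * Gk β (v' - v) := by
  by_cases h : v' = v
  · subst h
    simp [Gk, sub_self, norm_zero, div_zero]
  · have hr : (0:ℝ) < ‖v' - v‖ := by
      rw [norm_pos_iff]; exact sub_ne_zero.mpr h
    set r : ℝ := ‖v' - v‖ with hrdef
    set S : ℝ := (inner ℝ v (v' - v) : ℝ) with hSdef
    have hinner : (inner ℝ v' (v' - v) : ℝ) = S + r^2 := by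
      have h1 := @inner_sub_left ℝ _ _ _ _ v' v (v' - v)
      have h2 := @real_inner_self_eq_norm_sq _ _ _ (v' - v)
      rw [hSdef, hrdef]; linarith
    have hnorm : ‖v'‖^2 = ‖v‖^2 + 2*S + r^2 := by
      have h' : v + (v' - v) = v' := by abel
      calc ‖v'‖^2 = ‖v + (v'-v)‖^2 := by rw [h']
        _ = _ := norm_add_sq_real _ _
    set cβ : ℝ := Real.sqrt ((β / (2 * Real.pi)) ^ ((3 : ℝ) / 2)) with hcβ
    set dβ : ℝ := (β / (2 * Real.pi)) ^ ((1 : ℝ) / 2) with hdβ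
    have hcβ0 : 0 < cβ := Real.sqrt_pos.mpr (Real.rpow_pos_of_pos (div_pos hβ two_pi_pos) _)
    have hdβ0 : 0 < dβ := Real.rpow_pos_of_pos (div_pos hβ two_pi_pos) _
    have hexp : -(β/4)*‖v‖^2 + -(β/2)*((S + r^2)/r)^2 ≤ -(β/4)*‖v'‖^2 + -(β/8)*r^2 := by
      have hr2 : (0:ℝ) < r^2 := by positivity
      have hQ : ((S + r^2)/r)^2 = (S + r^2)^2/r^2 := div_pow _ _ _
      have hQge : (4*S + 3*r^2)/4 ≤ (S + r^2)^2/r^2 := by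
        rw [div_le_div_iff₀ (by norm_num) hr2]
        nlinarith [sq_nonneg (2*S + r^2)]
      have hmul := mul_le_mul_of_nonneg_left hQge (by positivity : (0:ℝ) ≤ β/2)
      rw [hQ, hnorm]
      nlinarith [hmul]
    calc Real.sqrt (Mβ β v) * (eFun β v v' / ‖v' - v‖)
        = (cβ * dβ / r) * Real.exp (-(β/4)*‖v‖^2 + -(β/2)*((S + r^2)/r)^2) := by
          rw [sqrt_Mβ_eq hβ, eFun, hinner, Real.exp_add, ← hrdef, ← hcβ, ← hdβ]
          ring
      _ ≤ (cβ * dβ / r) * Real.exp (-(β/4)*‖v'‖^2 + -(β/8)*r^2) := by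
          apply mul_le_mul_of_nonneg_left (Real.exp_le_exp.mpr hexp) (by positivity)
      _ = Real.sqrt (Mβ β v') * Gk β (v' - v) := by
          rw [sqrt_Mβ_eq hβ, Gk, Real.exp_add, ← hrdef, ← hcβ, ← hdβ]
          ring

/-- Telescoping product of ratios along a chain. -/
lemma prod_ratio {m : ℕ} (φ : Fin (m+1) → ℝ) (hφ : ∀ i, 0 < φ i) :
    ∏ i : Fin m, φ i.succ / φ i.castSucc = φ (Fin.last m) / φ 0 := by
  induction m with
  | zero => simp [div_self (hφ 0).ne']
  | succ m ih =>
      rw [Fin.prod_univ_castSucc (f := fun i : Fin (m+1) => φ i.succ / φ i.castSucc)]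
      have h1 : ∀ i : Fin m, φ (i.castSucc).succ / φ (i.castSucc).castSucc
          = (φ ∘ Fin.castSucc) i.succ / (φ ∘ Fin.castSucc) i.castSucc := by
        intro i
        simp only [Function.comp, Fin.succ_castSucc]
      rw [Finset.prod_congr rfl (fun i _ => h1 i), ih (φ ∘ Fin.castSucc) (fun i => hφ _)]
      simp only [Function.comp, Fin.castSucc_zero, Fin.succ_last]
      have h2 := (hφ ((Fin.last m).castSucc)).ne'
      have h3 := (hφ 0).ne'
      field_simp
/-- Pointwise chain bound. -/
lemma chain_le {β : ℝ} (hβ : 0 < β) (n : ℕ) (v₀ : E3) (w : Fin (n+1) → E3) :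
    (∏ i : Fin (n + 1),
        eFun β (consV v₀ w (Fin.castSucc i)) (consV v₀ w i.succ) /
          ‖consV v₀ w i.succ - consV v₀ w (Fin.castSucc i)‖) ≤
      (Real.sqrt (Mβ β v₀))⁻¹ *
        (Real.sqrt (Mβ β (w (Fin.last n))) *
          ∏ i : Fin (n + 1), Gk β (consV v₀ w i.succ - consV v₀ w (Fin.castSucc i))) := by
  set c : Fin (n+2) → E3 := consV v₀ w with hc
  have hper : ∀ i : Fin (n+1),
      eFun β (c i.castSucc) (c i.succ) / ‖c i.succ - c i.castSucc‖ ≤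
        (Real.sqrt (Mβ β (c i.succ)) / Real.sqrt (Mβ β (c i.castSucc))) *
          Gk β (c i.succ - c i.castSucc) := by
    intro i
    have hk := key_kernel hβ (c i.castSucc) (c i.succ)
    have hpos := sqrt_Mβ_pos hβ (c i.castSucc)
    rw [div_mul_eq_mul_div, le_div_iff₀ hpos, mul_comm]
    exact hk
  calc (∏ i : Fin (n + 1), eFun β (c i.castSucc) (c i.succ) / ‖c i.succ - c i.castSucc‖)
      ≤ ∏ i : Fin (n+1), (Real.sqrt (Mβ β (c i.succ)) / Real.sqrt (Mβ β (c i.castSucc))) *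
          Gk β (c i.succ - c i.castSucc) := by
        apply Finset.prod_le_prod
        · intro i _
          exact div_nonneg (eFun_nonneg hβ _ _) (norm_nonneg _)
        · intro i _
          exact hper i
    _ = (∏ i : Fin (n+1), Real.sqrt (Mβ β (c i.succ)) / Real.sqrt (Mβ β (c i.castSucc))) *
          ∏ i : Fin (n+1), Gk β (c i.succ - c i.castSucc) := Finset.prod_mul_distrib
    _ = (Real.sqrt (Mβ β (c (Fin.last (n+1)))) / Real.sqrt (Mβ β (c 0))) *
          ∏ i : Fin (n+1), Gk β (c i.succ - c i.castSucc) := by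
        rw [prod_ratio (fun j => Real.sqrt (Mβ β (c j))) (fun j => sqrt_Mβ_pos hβ _)]
    _ = (Real.sqrt (Mβ β v₀))⁻¹ *
        (Real.sqrt (Mβ β (w (Fin.last n))) *
          ∏ i : Fin (n+1), Gk β (c i.succ - c i.castSucc)) := by
        have h1 : c (Fin.last (n+1)) = w (Fin.last n) := by
          rw [hc, ← Fin.succ_last]; exact Fin.cons_succ _ _ _
        have h2 : c 0 = v₀ := rfl
        rw [h1, h2]
        ring

lemma measurable_Gk {β : ℝ} : Measurable (Gk β) := by
  apply Measurable.div _ measurable_norm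
  apply Measurable.mul measurable_const
  exact (Real.continuous_exp.comp (continuous_const.mul (continuous_norm.pow 2))).measurable

lemma measurable_sqrtM {β : ℝ} : Measurable (fun v : E3 => Real.sqrt (Mβ β v)) := by
  apply Real.continuous_sqrt.measurable.comp
  apply Measurable.mul measurable_const
  exact (Real.continuous_exp.comp (continuous_const.mul (continuous_norm.pow 2))).measurable

lemma norm_sq_eq_sum (u : E3) : ‖u‖^2 = ∑ i, (u i)^2 := by
  rw [EuclideanSpace.norm_eq, Real.sq_sqrt (by positivity)]; simp [sq_abs]

/-- Gaussian integrability on `E3`. -/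
lemma integrable_gaussE3 {a : ℝ} (ha : 0 < a) :
    Integrable (fun v : E3 => Real.exp (-a * ‖v‖ ^ 2)) := by
  have hmp := EuclideanSpace.volume_preserving_symm_measurableEquiv_toLp (Fin 3)
  have h : Integrable ((fun y : Fin 3 → ℝ => ∏ i, Real.exp (-a * (y i)^2)) ∘
      ((MeasurableEquiv.toLp 2 (Fin 3 → ℝ)).symm)) := by
    rw [MeasurePreserving.integrable_comp_emb hmp (MeasurableEquiv.measurableEmbedding _)]
    exact Integrable.fintype_prod (f := fun (_ : Fin 3) (x : ℝ) => Real.exp (-a * x^2))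
      (fun i => integrable_exp_neg_mul_sq ha)
  apply h.congr
  filter_upwards with v
  show ∏ i, Real.exp (-a * (((MeasurableEquiv.toLp 2 (Fin 3 → ℝ)).symm) v i)^2) = _
  have hv : ∀ i, ((MeasurableEquiv.toLp 2 (Fin 3 → ℝ)).symm) v i = v i := fun i => rfl
  simp_rw [hv]
  rw [← Real.exp_sum, norm_sq_eq_sum, Finset.mul_sum]

lemma integrable_sqrtM {β : ℝ} (hβ : 0 < β) :
    Integrable (fun v : E3 => Real.sqrt (Mβ β v)) := by
  have : (fun v : E3 => Real.sqrt (Mβ β v)) =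
      fun v => Real.sqrt ((β / (2 * Real.pi)) ^ ((3 : ℝ) / 2)) * Real.exp (-(β/4) * ‖v‖^2) := by
    funext v; exact sqrt_Mβ_eq hβ v
  rw [this]
  exact (integrable_gaussE3 (by positivity)).const_mul _
/-- 1D integrability of `|x|^(-1/3) e^{-a x²}`. -/
lemma integrable_h1d {a : ℝ} (ha : 0 < a) :
    Integrable (fun x : ℝ => |x| ^ (-(1:ℝ)/3) * Real.exp (-a * x ^ 2)) := by
  have hIoi : IntegrableOn (fun x : ℝ => |x| ^ (-(1:ℝ)/3) * Real.exp (-a * x ^ 2))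
      (Set.Ioi 0) := by
    apply (integrableOn_rpow_mul_exp_neg_mul_sq ha (by norm_num : (-1:ℝ) < -(1:ℝ)/3)).congr_fun
      _ measurableSet_Ioi
    intro x hx
    simp only [abs_of_pos (Set.mem_Ioi.mp hx)]
  have hIio : IntegrableOn (fun x : ℝ => |x| ^ (-(1:ℝ)/3) * Real.exp (-a * x ^ 2))
      (Set.Iio 0) := by
    have hneg := (Measure.measurePreserving_neg (volume : Measure ℝ))
    rw [← hneg.integrableOn_comp_preimage (Homeomorph.neg ℝ).measurableEmbedding]
    simp only [Function.comp_def, abs_neg, neg_sq, Set.neg_preimage, Set.neg_Iio, neg_zero]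
    exact hIoi
  rw [← integrableOn_univ, ← Set.Iio_union_Ici (a := (0:ℝ)), integrableOn_union,
    integrableOn_Ici_iff_integrableOn_Ioi]
  exact ⟨hIio, hIoi⟩

/-- The dominating kernel `Gk` is integrable. -/
lemma integrable_Gk {β : ℝ} (hβ : 0 < β) : Integrable (Gk β) := by
  set g : ℝ → ℝ := fun x => |x| ^ (-(1:ℝ)/3) * Real.exp (-(β/8) * x ^ 2) with hg
  have hgnn : ∀ x, 0 ≤ g x := fun x => by
    apply mul_nonneg (Real.rpow_nonneg (abs_nonneg _) _) (Real.exp_nonneg _)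
  set dβ : ℝ := (β / (2 * Real.pi)) ^ ((1 : ℝ) / 2) with hdβ
  have hdβ0 : (0:ℝ) < dβ := Real.rpow_pos_of_pos (div_pos hβ two_pi_pos) _
  -- the product majorant is integrable
  have hmp := EuclideanSpace.volume_preserving_symm_measurableEquiv_toLp (Fin 3)
  have hP : Integrable (fun v : E3 => dβ * ∏ i, g (v i)) := by
    apply Integrable.const_mul
    have h : Integrable ((fun y : Fin 3 → ℝ => ∏ i, g (y i)) ∘
        ((MeasurableEquiv.toLp 2 (Fin 3 → ℝ)).symm)) := by
      rw [MeasurePreserving.integrable_comp_emb hmp (MeasurableEquiv.measurableEmbedding _)]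
      exact Integrable.fintype_prod (f := fun (_ : Fin 3) => g)
        (fun i => integrable_h1d (by positivity))
    exact h.congr (by filter_upwards with v; rfl)
  -- a.e. bound
  apply hP.mono' (measurable_Gk.aestronglyMeasurable)
  have hae : ∀ᵐ v : E3, ∀ i : Fin 3, v i ≠ 0 := by
    rw [MeasureTheory.ae_all_iff]
    intro i
    rw [MeasureTheory.ae_iff]
    have : {v : E3 | ¬ v i ≠ 0} = ((MeasurableEquiv.toLp 2 (Fin 3 → ℝ)).symm) ⁻¹'
        {y : Fin 3 → ℝ | y i = 0} := by
      ext v; simp [Set.mem_preimage]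
    rw [this, hmp.measure_preimage]
    · rw [MeasureTheory.volume_pi]
      exact Measure.pi_hyperplane _ i 0
    · exact ((measurable_pi_apply i) (measurableSet_singleton 0)).nullMeasurableSet
  filter_upwards [hae] with u hu
  rw [Real.norm_eq_abs, abs_of_nonneg (Gk_nonneg hβ u)]
  have hu0 : u ≠ 0 := by
    intro h0
    exact hu 0 (by rw [h0]; rfl)
  have hnu : (0:ℝ) < ‖u‖ := norm_pos_iff.mpr hu0
  have habs : ∀ i : Fin 3, (0:ℝ) < |u i| := fun i => abs_pos.mpr (hu i)
  -- ∏ |u i| ≤ ‖u‖^3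
  have hcoord : ∀ i : Fin 3, |u i| ≤ ‖u‖ := by
    intro i
    have h1 : (u i)^2 ≤ ∑ j, (u j)^2 :=
      Finset.single_le_sum (f := fun j => (u j)^2) (fun j _ => sq_nonneg _) (Finset.mem_univ i)
    have h2 := norm_sq_eq_sum u
    nlinarith [abs_nonneg (u i), norm_nonneg u, sq_abs (u i)]
  have hprod : ∏ i : Fin 3, |u i| ≤ ‖u‖ ^ (3:ℕ) := by
    rw [Fin.prod_univ_three]
    calc |u 0| * |u 1| * |u 2| ≤ ‖u‖ * ‖u‖ * ‖u‖ := by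
          apply mul_le_mul (mul_le_mul (hcoord 0) (hcoord 1) (habs 1).le hnu.le) (hcoord 2)
            (habs 2).le (by positivity)
      _ = ‖u‖ ^ (3:ℕ) := by ring
  -- 1/‖u‖ ≤ ∏ |u i|^(-1/3)
  have hinv : ‖u‖⁻¹ ≤ ∏ i : Fin 3, |u i| ^ (-(1:ℝ)/3) := by
    have hprodpos : (0:ℝ) < ∏ i : Fin 3, |u i| := Finset.prod_pos (fun i _ => habs i)
    have h1 : (∏ i : Fin 3, |u i|) ^ (-(1:ℝ)/3) = ∏ i : Fin 3, |u i| ^ (-(1:ℝ)/3) :=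
      (Real.finset_prod_rpow _ _ (fun i _ => (habs i).le) _).symm
    rw [← h1]
    have h2 : (‖u‖ ^ (3:ℕ)) ^ (-(1:ℝ)/3) ≤ (∏ i : Fin 3, |u i|) ^ (-(1:ℝ)/3) :=
      Real.rpow_le_rpow_of_nonpos hprodpos hprod (by norm_num)
    calc ‖u‖⁻¹ = (‖u‖ ^ (3:ℕ)) ^ (-(1:ℝ)/3) := by
          rw [← Real.rpow_natCast ‖u‖ 3, ← Real.rpow_mul hnu.le]
          norm_num
          exact (Real.rpow_neg_one ‖u‖).symm
      _ ≤ _ := h2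
  -- assemble
  have hexp : Real.exp (-(β/8) * ‖u‖^2) = ∏ i, Real.exp (-(β/8) * (u i)^2) := by
    rw [← Real.exp_sum, norm_sq_eq_sum, Finset.mul_sum]
  calc Gk β u = dβ * (Real.exp (-(β/8) * ‖u‖^2) * ‖u‖⁻¹) := by
        rw [Gk, ← hdβ]; ring
    _ ≤ dβ * ((∏ i, Real.exp (-(β/8) * (u i)^2)) * ∏ i : Fin 3, |u i| ^ (-(1:ℝ)/3)) := by
        apply mul_le_mul_of_nonneg_left _ hdβ0.le
        rw [hexp]
        apply mul_le_mul_of_nonneg_left hinv (by positivity)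
    _ = dβ * ∏ i, g (u i) := by
        rw [hg, ← Finset.prod_mul_distrib]
        congr 1
        exact Finset.prod_congr rfl (fun i _ => by ring)
lemma measurable_consV_prod {m : ℕ} (k : Fin (m+1)) :
    Measurable (fun p : E3 × (Fin m → E3) => consV p.1 p.2 k) := by
  refine Fin.cases ?_ ?_ k
  · simp only [consV, Fin.cons_zero]
    exact measurable_fst
  · intro j
    simp only [consV, Fin.cons_succ]
    exact (measurable_pi_apply j).comp measurable_snd

lemma measurable_consV_snd {m : ℕ} (v₀ : E3) (k : Fin (m+1)) :
    Measurable (fun w : Fin m → E3 => consV v₀ w k) := by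
  refine Fin.cases ?_ ?_ k
  · simp only [consV, Fin.cons_zero]
    exact measurable_const
  · intro j
    simp only [consV, Fin.cons_succ]
    exact measurable_pi_apply j

/-- The iterated lintegral of the dominating chain. -/
lemma chain_lintegral {β : ℝ} (hβ : 0 < β) :
    ∀ (n : ℕ) (v₀ : E3),
      (∫⁻ w : Fin (n+1) → E3,
          ENNReal.ofReal (Real.sqrt (Mβ β (w (Fin.last n)))) *
            ∏ i : Fin (n+1),
              ENNReal.ofReal (Gk β (consV v₀ w i.succ - consV v₀ w (Fin.castSucc i))))
        ≤ ENNReal.ofReal (Real.sqrt ((β / (2 * Real.pi)) ^ ((3 : ℝ) / 2))) *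
            (∫⁻ u : E3, ENNReal.ofReal (Gk β u)) ^ (n+1) := by
  have hsqle : ∀ x : E3, Real.sqrt (Mβ β x) ≤ Real.sqrt ((β / (2 * Real.pi)) ^ ((3 : ℝ) / 2)) :=
    fun x => Real.sqrt_le_sqrt (Mβ_le hβ x)
  intro n
  induction n with
  | zero =>
      intro v₀
      set g : E3 → ENNReal :=
        fun x => ENNReal.ofReal (Real.sqrt (Mβ β x)) * ENNReal.ofReal (Gk β (x - v₀)) with hg
      have hgmeas : Measurable g :=
        ((ENNReal.measurable_ofReal.comp measurable_sqrtM).mul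
          (ENNReal.measurable_ofReal.comp (measurable_Gk.comp
            (measurable_id.sub measurable_const))))
      have hmp := MeasureTheory.volume_preserving_funUnique (Fin 1) E3
      have heq : ∀ w : Fin 1 → E3,
          (ENNReal.ofReal (Real.sqrt (Mβ β (w (Fin.last 0)))) *
            ∏ i : Fin 1,
              ENNReal.ofReal (Gk β (consV v₀ w i.succ - consV v₀ w (Fin.castSucc i))))
          = g ((MeasurableEquiv.funUnique (Fin 1) E3) w) := by
        intro w
        have h0 : (MeasurableEquiv.funUnique (Fin 1) E3) w = w 0 := rfl
        rw [h0, hg, Fin.prod_univ_one]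
        simp [consV, Fin.cons_succ, Fin.cons_zero, Fin.last]
      calc (∫⁻ w : Fin 1 → E3,
          ENNReal.ofReal (Real.sqrt (Mβ β (w (Fin.last 0)))) *
            ∏ i : Fin 1,
              ENNReal.ofReal (Gk β (consV v₀ w i.succ - consV v₀ w (Fin.castSucc i))))
          = ∫⁻ x : E3, g x := by
            rw [← hmp.lintegral_comp hgmeas]
            exact lintegral_congr heq
        _ ≤ ∫⁻ x : E3, ENNReal.ofReal (Real.sqrt ((β / (2 * Real.pi)) ^ ((3 : ℝ) / 2))) *
              ENNReal.ofReal (Gk β (x - v₀)) := by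
            apply lintegral_mono
            intro x
            exact mul_le_mul_left (ENNReal.ofReal_le_ofReal (hsqle x)) _
        _ = ENNReal.ofReal (Real.sqrt ((β / (2 * Real.pi)) ^ ((3 : ℝ) / 2))) *
              ∫⁻ x : E3, ENNReal.ofReal (Gk β (x - v₀)) :=
            lintegral_const_mul' _ _ ENNReal.ofReal_ne_top
        _ = ENNReal.ofReal (Real.sqrt ((β / (2 * Real.pi)) ^ ((3 : ℝ) / 2))) *
              (∫⁻ u : E3, ENNReal.ofReal (Gk β u)) ^ (0+1) := by
            rw [lintegral_sub_right_eq_self (fun x => ENNReal.ofReal (Gk β x)) v₀, pow_one]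
  | succ n ih =>
      intro v₀
      set e := MeasurableEquiv.piFinSuccAbove (fun _ : Fin (n+2) => E3) 0 with he
      have hmp : MeasurePreserving e (Measure.pi fun _ => (volume : Measure E3))
          ((volume : Measure E3).prod (Measure.pi fun _ => (volume : Measure E3))) :=
        measurePreserving_piFinSuccAbove (fun _ : Fin (n+2) => (volume : Measure E3)) 0
      set g : E3 × (Fin (n+1) → E3) → ENNReal := fun p =>
        ENNReal.ofReal (Gk β (p.1 - v₀)) *
          (ENNReal.ofReal (Real.sqrt (Mβ β (p.2 (Fin.last n)))) *
            ∏ i : Fin (n+1),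
              ENNReal.ofReal (Gk β (consV p.1 p.2 i.succ - consV p.1 p.2 (Fin.castSucc i))))
        with hgdef
      have hgmeas : Measurable g := by
        apply Measurable.mul
        · exact ENNReal.measurable_ofReal.comp
            (measurable_Gk.comp (measurable_fst.sub measurable_const))
        · apply Measurable.mul
          · exact ENNReal.measurable_ofReal.comp
              (measurable_sqrtM.comp ((measurable_pi_apply _).comp measurable_snd))
          · apply Finset.measurable_prod
            intro i _
            exact ENNReal.measurable_ofReal.comp (measurable_Gk.comp
              ((measurable_consV_prod i.succ).sub (measurable_consV_prod i.castSucc)))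
      have heq : ∀ w : Fin (n+2) → E3,
          (ENNReal.ofReal (Real.sqrt (Mβ β (w (Fin.last (n+1))))) *
            ∏ i : Fin (n+2),
              ENNReal.ofReal (Gk β (consV v₀ w i.succ - consV v₀ w (Fin.castSucc i))))
          = g (e w) := by
        intro w
        have hew : e w = (w 0, Fin.tail w) := by
          ext : 1
          · rfl
          · funext j
            simp [he, MeasurableEquiv.piFinSuccAbove, Fin.zero_succAbove, Fin.tail]
        rw [hew, hgdef]
        have hcons : consV (w 0) (Fin.tail w) = w := Fin.cons_self_tail w
        simp only [hcons]
        have htail : Fin.tail w (Fin.last n) = w (Fin.last (n+1)) := by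
          rw [Fin.tail]; rw [Fin.succ_last]
        rw [htail]
        rw [Fin.prod_univ_succ
          (f := fun i : Fin (n+2) =>
            ENNReal.ofReal (Gk β (consV v₀ w i.succ - consV v₀ w (Fin.castSucc i))))]
        have h0 : consV v₀ w (0 : Fin (n+2)).succ - consV v₀ w (Fin.castSucc 0) = w 0 - v₀ := by
          simp [consV, Fin.cons_succ, Fin.castSucc_zero, Fin.cons_zero]
        have hstep : ∀ j : Fin (n+1),
            consV v₀ w (j.succ).succ - consV v₀ w (Fin.castSucc j.succ)
              = w j.succ - w (Fin.castSucc j) := by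
          intro j
          rw [← Fin.succ_castSucc]
          simp [consV, Fin.cons_succ]
        rw [h0]
        simp_rw [hstep]
        ring
      calc (∫⁻ w : Fin (n+2) → E3,
          ENNReal.ofReal (Real.sqrt (Mβ β (w (Fin.last (n+1))))) *
            ∏ i : Fin (n+2),
              ENNReal.ofReal (Gk β (consV v₀ w i.succ - consV v₀ w (Fin.castSucc i))))
          = ∫⁻ p, g p ∂((volume : Measure E3).prod (Measure.pi fun _ => (volume : Measure E3))) := by
            rw [← hmp.lintegral_comp hgmeas]
            rw [MeasureTheory.volume_pi]
            exact lintegral_congr heq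
        _ = ∫⁻ x : E3, ∫⁻ y : Fin (n+1) → E3, g (x, y)
              ∂(Measure.pi fun _ => (volume : Measure E3)) ∂volume :=
            lintegral_prod g hgmeas.aemeasurable
        _ ≤ ∫⁻ x : E3, ENNReal.ofReal (Gk β (x - v₀)) *
              (ENNReal.ofReal (Real.sqrt ((β / (2 * Real.pi)) ^ ((3 : ℝ) / 2))) *
                (∫⁻ u : E3, ENNReal.ofReal (Gk β u)) ^ (n+1)) ∂volume := by
            apply lintegral_mono
            intro x
            show (∫⁻ y : Fin (n+1) → E3, g (x, y) ∂(Measure.pi fun _ => (volume : Measure E3)))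
              ≤ ENNReal.ofReal (Gk β (x - v₀)) *
                (ENNReal.ofReal (Real.sqrt ((β / (2 * Real.pi)) ^ ((3:ℝ)/2))) *
                  (∫⁻ u : E3, ENNReal.ofReal (Gk β u)) ^ (n+1))
            have hfix : ∀ y : Fin (n+1) → E3, g (x, y) = ENNReal.ofReal (Gk β (x - v₀)) *
                (ENNReal.ofReal (Real.sqrt (Mβ β (y (Fin.last n)))) *
                  ∏ i : Fin (n+1),
                    ENNReal.ofReal (Gk β (consV x y i.succ - consV x y (Fin.castSucc i)))) :=
              fun y => rfl
            rw [lintegral_congr hfix, lintegral_const_mul' _ _ ENNReal.ofReal_ne_top]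
            apply mul_le_mul_right
            rw [← MeasureTheory.volume_pi]
            exact ih x
        _ = (∫⁻ x : E3, ENNReal.ofReal (Gk β (x - v₀)) ∂volume) *
              (ENNReal.ofReal (Real.sqrt ((β / (2 * Real.pi)) ^ ((3 : ℝ) / 2))) *
                (∫⁻ u : E3, ENNReal.ofReal (Gk β u)) ^ (n+1)) :=
            lintegral_mul_const _
              (ENNReal.measurable_ofReal.comp (measurable_Gk.comp
                (measurable_id.sub measurable_const)))
        _ = ENNReal.ofReal (Real.sqrt ((β / (2 * Real.pi)) ^ ((3 : ℝ) / 2))) *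
              (∫⁻ u : E3, ENNReal.ofReal (Gk β u)) ^ (n+1+1) := by
            rw [lintegral_sub_right_eq_self (fun x => ENNReal.ofReal (Gk β x)) v₀]
            ring
lemma measurableSet_S (n : ℕ) (t : ℝ) :
    MeasurableSet {τ : Fin (n+1) → ℝ |
      (∀ i, 0 ≤ τ i ∧ τ i ≤ t) ∧ ∀ i j : Fin (n+1), i ≤ j → τ j ≤ τ i} := by
  rw [Set.setOf_and]
  apply MeasurableSet.inter
  · rw [Set.setOf_forall]
    apply MeasurableSet.iInter
    intro i
    have : {τ : Fin (n+1) → ℝ | 0 ≤ τ i ∧ τ i ≤ t} = (fun τ : Fin (n+1) → ℝ => τ i) ⁻¹' (Set.Icc 0 t) := by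
      ext τ; simp [Set.mem_Icc]
    rw [this]
    exact (measurable_pi_apply i) measurableSet_Icc
  · rw [Set.setOf_forall]
    apply MeasurableSet.iInter
    intro i
    rw [Set.setOf_forall]
    apply MeasurableSet.iInter
    intro j
    by_cases hij : i ≤ j
    · simp only [hij, true_implies]
      exact measurableSet_le (measurable_pi_apply j) (measurable_pi_apply i)
    · simp only [hij, false_implies, Set.setOf_true]
      exact MeasurableSet.univ

lemma volume_S_le (n : ℕ) {t : ℝ} (ht : 0 ≤ t) :
    volume {τ : Fin (n+1) → ℝ |
      (∀ i, 0 ≤ τ i ∧ τ i ≤ t) ∧ ∀ i j : Fin (n+1), i ≤ j → τ j ≤ τ i}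
      ≤ ENNReal.ofReal t ^ (n+1) := by
  have hsub : {τ : Fin (n+1) → ℝ |
      (∀ i, 0 ≤ τ i ∧ τ i ≤ t) ∧ ∀ i j : Fin (n+1), i ≤ j → τ j ≤ τ i}
      ⊆ Set.pi Set.univ (fun _ : Fin (n+1) => Set.Icc 0 t) := by
    intro τ hτ i _
    exact Set.mem_Icc.mpr ⟨(hτ.1 i).1, (hτ.1 i).2⟩
  calc volume {τ : Fin (n+1) → ℝ |
      (∀ i, 0 ≤ τ i ∧ τ i ≤ t) ∧ ∀ i j : Fin (n+1), i ≤ j → τ j ≤ τ i}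
      ≤ volume (Set.pi Set.univ (fun _ : Fin (n+1) => Set.Icc 0 t)) := measure_mono hsub
    _ = ∏ _i : Fin (n+1), volume (Set.Icc (0:ℝ) t) := volume_pi_pi _
    _ = ENNReal.ofReal t ^ (n+1) := by
        rw [Real.volume_Icc, sub_zero, Finset.prod_const, Finset.card_univ, Fintype.card_fin]

lemma consT_diff_nonneg {n : ℕ} {t : ℝ} {τ : Fin (n+1) → ℝ}
    (h1 : ∀ i, 0 ≤ τ i ∧ τ i ≤ t) (h2 : ∀ i j : Fin (n+1), i ≤ j → τ j ≤ τ i)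
    (i : Fin (n+1)) :
    0 ≤ consT t τ (Fin.castSucc i) - consT t τ i.succ := by
  refine Fin.cases ?_ ?_ i
  · have ha : consT t τ (Fin.castSucc (0 : Fin (n+1))) = t := by
      rw [Fin.castSucc_zero]; rfl
    have hb : consT t τ (0 : Fin (n+1)).succ = τ 0 := by
      rw [consT, Fin.cons_succ]
    rw [ha, hb]
    linarith [(h1 0).2]
  · intro j
    have ha : consT t τ (Fin.castSucc j.succ) = τ (Fin.castSucc j) := by
      rw [← Fin.succ_castSucc, consT, Fin.cons_succ]
    have hb : consT t τ (j.succ).succ = τ j.succ := by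
      rw [consT, Fin.cons_succ]
    rw [ha, hb]
    linarith [h2 (Fin.castSucc j) j.succ (Fin.castSucc_lt_succ (i := j)).le]

lemma consT_last_nonneg {n : ℕ} {t : ℝ} {τ : Fin (n+1) → ℝ}
    (h1 : ∀ i, 0 ≤ τ i ∧ τ i ≤ t) :
    0 ≤ consT t τ (Fin.last (n+1)) := by
  rw [← Fin.succ_last, consT, Fin.cons_succ]
  exact (h1 _).1

lemma Psi_nonneg {β μ t : ℝ} (hβ : 0 < β) (hμ : 0 ≤ μ) (n : ℕ) :
    0 ≤ Psi β μ t (n+1) := by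
  apply mul_nonneg (pow_nonneg hμ _)
  apply integral_nonneg
  intro v₀
  apply mul_nonneg (Mβ_pos hβ v₀).le
  apply setIntegral_nonneg (measurableSet_S n t)
  intro τ _
  apply integral_nonneg
  intro w
  apply mul_nonneg
  · exact Finset.prod_nonneg fun i _ => div_nonneg (eFun_nonneg hβ _ _) (norm_nonneg _)
  · exact Real.exp_nonneg _
/-- The total weight of trajectories with at least two collisions up to time `t` for the
stationary linear Boltzmann jump process is of order `(μt)²` for short times: there are
`C, c > 0` (depending only on `β`) such that for all `μ > 0`, `t ≥ 0` with `μt ≤ c`, the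
tail series `Σ_{n≥2} Ψ_n(μ,t)` converges and `Σ_{n≥2} Ψ_n(μ,t) ≤ C (μt)²`. -/
theorem tail_weight_two_collisions_short_time (β : ℝ) (hβ : 0 < β) :
    ∃ C c : ℝ, 0 < C ∧ 0 < c ∧ ∀ μ t : ℝ, 0 < μ → 0 ≤ t → μ * t ≤ c →
      Summable (fun n : ℕ => Psi β μ t (n + 2)) ∧
      (∑' n : ℕ, Psi β μ t (n + 2)) ≤ C * (μ * t) ^ 2 := by
  classical
  set Cβ : ℝ := (β / (2 * Real.pi)) ^ ((3 : ℝ) / 2) with hCβdef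
  set c₀ : ℝ := Real.sqrt Cβ with hc₀def
  have hc₀ : 0 < c₀ := Real.sqrt_pos.mpr (Real.rpow_pos_of_pos (div_pos hβ two_pi_pos) _)
  set γ : ENNReal := ∫⁻ u : E3, ENNReal.ofReal (Gk β u) with hγdef
  have hγtop : γ ≠ ⊤ := (integrable_Gk hβ).lintegral_lt_top.ne
  set Γ : ℝ := γ.toReal with hΓdef
  have hΓ0 : 0 ≤ Γ := ENNReal.toReal_nonneg
  set c₁ : ℝ := ∫ v : E3, Real.sqrt (Mβ β v) with hc₁def
  have hc₁0 : 0 ≤ c₁ := integral_nonneg fun v => Real.sqrt_nonneg _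
  set K : ℝ := c₀ * c₁ with hKdef
  have hK0 : 0 ≤ K := mul_nonneg hc₀.le hc₁0
  set Γ' : ℝ := max Γ 1 with hΓ'def
  have hΓ'1 : 1 ≤ Γ' := le_max_right _ _
  have hΓ'0 : 0 < Γ' := lt_of_lt_of_le one_pos hΓ'1
  refine ⟨2*K*Γ'^2 + 1, 1/(2*Γ'), by positivity, by positivity, ?_⟩
  intro μ t hμ ht hμt
  -- Master estimate : Psi β μ t (n+1) ≤ K * (Γ * (μ*t))^(n+1)
  have hPsi : ∀ n : ℕ, Psi β μ t (n+1) ≤ K * (Γ * (μ*t))^(n+1) := by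
    intro n
    set S := {τ : Fin (n + 1) → ℝ |
        (∀ i, 0 ≤ τ i ∧ τ i ≤ t) ∧ ∀ i j : Fin (n + 1), i ≤ j → τ j ≤ τ i} with hSdef
    have hSmeas : MeasurableSet S := measurableSet_S n t
    have hSvol : volume S ≤ ENNReal.ofReal t ^ (n+1) := volume_S_le n ht
    have hSfin : volume S < ⊤ :=
      lt_of_le_of_lt hSvol (ENNReal.pow_lt_top ENNReal.ofReal_lt_top)
    -- inner w-integrand
    set F : E3 → (Fin (n+1) → ℝ) → (Fin (n+1) → E3) → ℝ := fun v₀ τ w =>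
      (∏ i : Fin (n + 1),
        eFun β (consV v₀ w (Fin.castSucc i)) (consV v₀ w i.succ) /
          ‖consV v₀ w i.succ - consV v₀ w (Fin.castSucc i)‖) *
      Real.exp (-(μ *
        ((∑ i : Fin (n + 1),
            lam β (consV v₀ w (Fin.castSucc i)) *
              (consT t τ (Fin.castSucc i) - consT t τ i.succ)) +
          lam β (consV v₀ w (Fin.last (n + 1))) *
            consT t τ (Fin.last (n + 1))))) with hFdef
    have hFnn : ∀ v₀ τ w, 0 ≤ F v₀ τ w := by
      intro v₀ τ w
      apply mul_nonneg
      · exact Finset.prod_nonneg fun i _ => div_nonneg (eFun_nonneg hβ _ _) (norm_nonneg _)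
      · exact Real.exp_nonneg _
    -- w-level bound
    have hW : ∀ (v₀ : E3), ∀ τ ∈ S,
        (∫ w : Fin (n+1) → E3, F v₀ τ w) ≤ (Real.sqrt (Mβ β v₀))⁻¹ * (c₀ * Γ^(n+1)) := by
      intro v₀ τ hτ
      set H : (Fin (n+1) → E3) → ℝ := fun w =>
        (Real.sqrt (Mβ β v₀))⁻¹ * (Real.sqrt (Mβ β (w (Fin.last n))) *
          ∏ i : Fin (n+1), Gk β (consV v₀ w i.succ - consV v₀ w (Fin.castSucc i))) with hHdef
      have hHnn : ∀ w, 0 ≤ H w := by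
        intro w
        apply mul_nonneg (inv_nonneg.mpr (Real.sqrt_nonneg _))
        exact mul_nonneg (Real.sqrt_nonneg _)
          (Finset.prod_nonneg fun i _ => Gk_nonneg hβ _)
      have hHmeas : Measurable H := by
        apply Measurable.const_mul
        apply Measurable.mul (measurable_sqrtM.comp (measurable_pi_apply (Fin.last n)))
        apply Finset.measurable_prod
        intro i _
        exact measurable_Gk.comp
          ((measurable_consV_snd v₀ i.succ).sub (measurable_consV_snd v₀ (Fin.castSucc i)))
      have hlin : (∫⁻ w : Fin (n+1) → E3, ENNReal.ofReal (H w)) ≤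
          ENNReal.ofReal ((Real.sqrt (Mβ β v₀))⁻¹) * (ENNReal.ofReal c₀ * γ^(n+1)) := by
        have hid : ∀ w : Fin (n+1) → E3, ENNReal.ofReal (H w) =
            ENNReal.ofReal ((Real.sqrt (Mβ β v₀))⁻¹) *
              (ENNReal.ofReal (Real.sqrt (Mβ β (w (Fin.last n)))) *
                ∏ i : Fin (n+1),
                  ENNReal.ofReal (Gk β (consV v₀ w i.succ - consV v₀ w (Fin.castSucc i)))) := by
          intro w
          rw [hHdef]
          rw [ENNReal.ofReal_mul (inv_nonneg.mpr (Real.sqrt_nonneg _)),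
            ENNReal.ofReal_mul (Real.sqrt_nonneg _),
            ENNReal.ofReal_prod_of_nonneg (fun i _ => Gk_nonneg hβ _)]
        rw [lintegral_congr hid, lintegral_const_mul' _ _ ENNReal.ofReal_ne_top]
        exact mul_le_mul_right (chain_lintegral hβ n v₀) _
      have htopB : ENNReal.ofReal ((Real.sqrt (Mβ β v₀))⁻¹) *
          (ENNReal.ofReal c₀ * γ^(n+1)) ≠ ⊤ :=
        ENNReal.mul_ne_top ENNReal.ofReal_ne_top
          (ENNReal.mul_ne_top ENNReal.ofReal_ne_top (ENNReal.pow_ne_top hγtop))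
      have hHint : Integrable H := by
        constructor
        · exact hHmeas.aestronglyMeasurable
        · rw [hasFiniteIntegral_iff_norm]
          have hnm : ∀ w : Fin (n+1) → E3, ENNReal.ofReal ‖H w‖ = ENNReal.ofReal (H w) := by
            intro w; rw [Real.norm_eq_abs, abs_of_nonneg (hHnn w)]
          rw [lintegral_congr hnm]
          exact lt_of_le_of_lt hlin (lt_top_iff_ne_top.mpr htopB)
      have hHval : (∫ w : Fin (n+1) → E3, H w) ≤ (Real.sqrt (Mβ β v₀))⁻¹ * (c₀ * Γ^(n+1)) := by
        rw [integral_eq_lintegral_of_nonneg_ae (Filter.Eventually.of_forall hHnn)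
          hHmeas.aestronglyMeasurable]
        refine le_trans (ENNReal.toReal_mono htopB hlin) (le_of_eq ?_)
        rw [ENNReal.toReal_mul, ENNReal.toReal_mul, ENNReal.toReal_pow,
          ENNReal.toReal_ofReal (inv_nonneg.mpr (Real.sqrt_nonneg _)),
          ENNReal.toReal_ofReal hc₀.le]
      have hpt : ∀ w : Fin (n+1) → E3, F v₀ τ w ≤ H w := by
        intro w
        have hprodnn : 0 ≤ ∏ i : Fin (n + 1),
            eFun β (consV v₀ w (Fin.castSucc i)) (consV v₀ w i.succ) /
              ‖consV v₀ w i.succ - consV v₀ w (Fin.castSucc i)‖ :=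
          Finset.prod_nonneg fun i _ => div_nonneg (eFun_nonneg hβ _ _) (norm_nonneg _)
        have hexple : Real.exp (-(μ *
            ((∑ i : Fin (n + 1),
                lam β (consV v₀ w (Fin.castSucc i)) *
                  (consT t τ (Fin.castSucc i) - consT t τ i.succ)) +
              lam β (consV v₀ w (Fin.last (n + 1))) *
                consT t τ (Fin.last (n + 1))))) ≤ 1 := by
          rw [← Real.exp_zero]
          apply Real.exp_le_exp.mpr
          have hX : 0 ≤ (∑ i : Fin (n + 1),
              lam β (consV v₀ w (Fin.castSucc i)) *
                (consT t τ (Fin.castSucc i) - consT t τ i.succ)) +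
              lam β (consV v₀ w (Fin.last (n + 1))) * consT t τ (Fin.last (n + 1)) := by
            apply add_nonneg
            · apply Finset.sum_nonneg
              intro i _
              exact mul_nonneg (lam_nonneg hβ _) (consT_diff_nonneg hτ.1 hτ.2 i)
            · exact mul_nonneg (lam_nonneg hβ _) (consT_last_nonneg hτ.1)
          nlinarith [mul_nonneg hμ.le hX]
        calc F v₀ τ w ≤ (∏ i : Fin (n + 1),
              eFun β (consV v₀ w (Fin.castSucc i)) (consV v₀ w i.succ) /
                ‖consV v₀ w i.succ - consV v₀ w (Fin.castSucc i)‖) * 1 := by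
              rw [hFdef]
              exact mul_le_mul_of_nonneg_left hexple hprodnn
          _ = ∏ i : Fin (n + 1),
              eFun β (consV v₀ w (Fin.castSucc i)) (consV v₀ w i.succ) /
                ‖consV v₀ w i.succ - consV v₀ w (Fin.castSucc i)‖ := mul_one _
          _ ≤ H w := chain_le hβ n v₀ w
      exact le_trans (integral_mono_of_nonneg
        (Filter.Eventually.of_forall (hFnn v₀ τ)) hHint (Filter.Eventually.of_forall hpt)) hHval
    -- τ-level bound
    have hA : ∀ v₀ : E3,
        (∫ τ in S, ∫ w : Fin (n+1) → E3, F v₀ τ w) ≤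
          t^(n+1) * ((Real.sqrt (Mβ β v₀))⁻¹ * (c₀ * Γ^(n+1))) := by
      intro v₀
      set B : ℝ := (Real.sqrt (Mβ β v₀))⁻¹ * (c₀ * Γ^(n+1)) with hBdef
      have hB0 : 0 ≤ B := by
        apply mul_nonneg (inv_nonneg.mpr (Real.sqrt_nonneg _))
        exact mul_nonneg hc₀.le (pow_nonneg hΓ0 _)
      have h1 : (∫ τ in S, ∫ w : Fin (n+1) → E3, F v₀ τ w) ≤ ∫ _τ in S, B := by
        apply integral_mono_of_nonneg
        · exact Filter.Eventually.of_forall fun τ => integral_nonneg (hFnn v₀ τ)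
        · exact integrableOn_const hSfin.ne
        · exact ae_restrict_of_forall_mem hSmeas fun τ hτ => hW v₀ τ hτ
      have h2 : (∫ _τ in S, B) = (volume S).toReal * B := by
        rw [setIntegral_const, smul_eq_mul]; rfl
      have h3 : (volume S).toReal ≤ t^(n+1) := by
        have := ENNReal.toReal_mono (ENNReal.pow_ne_top ENNReal.ofReal_ne_top) hSvol
        rwa [ENNReal.toReal_pow, ENNReal.toReal_ofReal ht] at this
      calc (∫ τ in S, ∫ w : Fin (n+1) → E3, F v₀ τ w) ≤ (volume S).toReal * B := by
            rw [← h2]; exact h1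
        _ ≤ t^(n+1) * B := mul_le_mul_of_nonneg_right h3 hB0
    -- v₀-level bound
    have hmain : (∫ v₀ : E3, Mβ β v₀ * ∫ τ in S, ∫ w : Fin (n+1) → E3, F v₀ τ w) ≤
        (t^(n+1) * (c₀ * Γ^(n+1))) * c₁ := by
      have hmaj : Integrable (fun v₀ : E3 =>
          (t^(n+1) * (c₀ * Γ^(n+1))) * Real.sqrt (Mβ β v₀)) :=
        (integrable_sqrtM hβ).const_mul _
      have hle : ∀ v₀ : E3, Mβ β v₀ * (∫ τ in S, ∫ w : Fin (n+1) → E3, F v₀ τ w) ≤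
          (t^(n+1) * (c₀ * Γ^(n+1))) * Real.sqrt (Mβ β v₀) := by
        intro v₀
        have h2 := mul_le_mul_of_nonneg_left (hA v₀) (Mβ_pos hβ v₀).le
        refine h2.trans (le_of_eq ?_)
        have hne : Real.sqrt (Mβ β v₀) ≠ 0 := (sqrt_Mβ_pos hβ v₀).ne'
        have hsq : Mβ β v₀ * (Real.sqrt (Mβ β v₀))⁻¹ = Real.sqrt (Mβ β v₀) := by
          field_simp
          exact (Real.sq_sqrt (Mβ_pos hβ v₀).le).symm
        calc Mβ β v₀ * (t^(n+1) * ((Real.sqrt (Mβ β v₀))⁻¹ * (c₀ * Γ^(n+1))))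
            = (Mβ β v₀ * (Real.sqrt (Mβ β v₀))⁻¹) * (t^(n+1) * (c₀ * Γ^(n+1))) := by ring
          _ = (t^(n+1) * (c₀ * Γ^(n+1))) * Real.sqrt (Mβ β v₀) := by rw [hsq]; ring
      have hnn : ∀ v₀ : E3, 0 ≤ Mβ β v₀ * ∫ τ in S, ∫ w : Fin (n+1) → E3, F v₀ τ w := by
        intro v₀
        apply mul_nonneg (Mβ_pos hβ v₀).le
        exact setIntegral_nonneg hSmeas fun τ _ => integral_nonneg (hFnn v₀ τ)
      calc (∫ v₀ : E3, Mβ β v₀ * ∫ τ in S, ∫ w : Fin (n+1) → E3, F v₀ τ w)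
          ≤ ∫ v₀ : E3, (t^(n+1) * (c₀ * Γ^(n+1))) * Real.sqrt (Mβ β v₀) :=
            integral_mono_of_nonneg (Filter.Eventually.of_forall hnn) hmaj
              (Filter.Eventually.of_forall hle)
        _ = (t^(n+1) * (c₀ * Γ^(n+1))) * c₁ := by rw [integral_const_mul, hc₁def]
    -- put together
    have hunfold : Psi β μ t (n+1) =
        μ ^ (n + 1) * ∫ v₀ : E3, Mβ β v₀ * ∫ τ in S, ∫ w : Fin (n+1) → E3, F v₀ τ w := rfl
    rw [hunfold]
    calc μ ^ (n + 1) * ∫ v₀ : E3, Mβ β v₀ * ∫ τ in S, ∫ w : Fin (n+1) → E3, F v₀ τ w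
        ≤ μ ^ (n+1) * ((t^(n+1) * (c₀ * Γ^(n+1))) * c₁) :=
          mul_le_mul_of_nonneg_left hmain (pow_nonneg hμ.le _)
      _ = K * (Γ * (μ*t))^(n+1) := by
          rw [hKdef, mul_pow, mul_pow]; ring
  -- Geometric series assembly
  set q : ℝ := Γ' * (μ * t) with hqdef
  have hμt0 : 0 ≤ μ * t := mul_nonneg hμ.le ht
  have hq0 : 0 ≤ q := mul_nonneg hΓ'0.le hμt0
  have hq12 : q ≤ 1/2 := by
    rw [hqdef]
    calc Γ' * (μ*t) ≤ Γ' * (1/(2*Γ')) := mul_le_mul_of_nonneg_left hμt hΓ'0.le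
      _ = 1/2 := by field_simp
  have hq1 : q < 1 := lt_of_le_of_lt hq12 (by norm_num)
  have hPsile : ∀ n : ℕ, Psi β μ t (n+2) ≤ (K*q^2) * q^n := by
    intro n
    have h1 := hPsi (n+1)
    have h2 : (Γ*(μ*t))^(n+1+1) ≤ q^(n+1+1) := by
      apply pow_le_pow_left₀ (mul_nonneg hΓ0 hμt0)
      exact mul_le_mul_of_nonneg_right (le_max_left _ _) hμt0
    calc Psi β μ t (n+2) ≤ K * (Γ*(μ*t))^(n+1+1) := h1
      _ ≤ K * q^(n+1+1) := mul_le_mul_of_nonneg_left h2 hK0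
      _ = (K*q^2) * q^n := by ring
  have hPsinn : ∀ n : ℕ, 0 ≤ Psi β μ t (n+2) := fun n => Psi_nonneg hβ hμ.le (n+1)
  have hgeom : Summable (fun n : ℕ => (K*q^2) * q^n) :=
    (summable_geometric_of_lt_one hq0 hq1).mul_left _
  have hsum : Summable (fun n : ℕ => Psi β μ t (n+2)) :=
    Summable.of_nonneg_of_le hPsinn hPsile hgeom
  refine ⟨hsum, ?_⟩
  have htsum := Summable.tsum_le_tsum hPsile hsum hgeom
  rw [tsum_mul_left, tsum_geometric_of_lt_one hq0 hq1] at htsum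
  have hinv : (1-q)⁻¹ ≤ 2 := by
    rw [inv_le_comm₀ (by linarith) (by norm_num)]
    linarith
  have hKq : 0 ≤ K * q^2 := mul_nonneg hK0 (sq_nonneg _)
  calc (∑' n : ℕ, Psi β μ t (n+2)) ≤ (K*q^2) * (1-q)⁻¹ := htsum
    _ ≤ (K*q^2) * 2 := mul_le_mul_of_nonneg_left hinv hKq
    _ ≤ (2*K*Γ'^2 + 1) * (μ*t)^2 := by
        have hqsq : q^2 = Γ'^2*(μ*t)^2 := by rw [hqdef]; ring
        nlinarith [sq_nonneg (μ*t), hK0]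
end
end
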